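/- arXiv:math/0212244 — 4 statements merged into one kernel-verified Lean document; each statement's English description precedes it below -/
import Mathlib

section
/- Let f, g : Fin n → EuclideanSpace ℝ (Fin n) be two linearly independent indecomposable families of vectors, each vector belonging to {±e_i : i} ∪ {±e_i ± e_j : i ≠ j}, each family containing at least one vector of the form ±e_i. If |⟪f k, f l⟫| = |⟪g k, g l⟫| for all k, l, then there exist a signed permutation W of the coordinates (a linear isometry x ↦ (δ_i x_{σ(i)}) with σ a permutation of Fin n and δ_i ∈ {−1, 1}) and a sign function ε : Fin n → {−1, 1} such that g k = ε k · W(f k) for all k. (Every family of simplices generating B_n has a unique embedding into B_n up to the action of the Weyl group of B_n.) -/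
open scoped RealInnerProductSpace

/-- The graph whose vertices are the members of the family `f`, two of them being
adjacent iff they are not orthogonal; the family is indecomposable iff this graph
is connected. -/
def gramGraph {E : Type*} [NormedAddCommGroup E] [InnerProductSpace ℝ E]
    {ι : Type*} (f : ι → E) : SimpleGraph ι where
  Adj i j := i ≠ j ∧ ⟪f i, f j⟫ ≠ 0
  symm := by
    constructor
    intro i j h
    exact ⟨h.1.symm, by rw [real_inner_comm]; exact h.2⟩
  loopless := ⟨fun i h => h.1 rfl⟩

/-- `v` is a root of the root system `Bₙ`: `v = ±eᵢ` or `v = ±eᵢ ± eⱼ` with `i ≠ j`. -/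
def IsBRoot {m : ℕ} (v : EuclideanSpace ℝ (Fin m)) : Prop :=
  (∃ i, v = EuclideanSpace.single i 1 ∨ v = -EuclideanSpace.single i 1) ∨
  (∃ i j, i ≠ j ∧
    (v = EuclideanSpace.single i 1 + EuclideanSpace.single j 1 ∨
     v = EuclideanSpace.single i 1 - EuclideanSpace.single j 1 ∨
     v = -(EuclideanSpace.single i 1 + EuclideanSpace.single j 1)))

open scoped RealInnerProductSpace

lemma euclid_inner {n : ℕ} (x y : EuclideanSpace ℝ (Fin n)) : ⟪x,y⟫ = ∑ i, x i * y i := by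
  simp [PiLp.inner_apply, mul_comm]

lemma bn_normal_form {m : ℕ} {v : EuclideanSpace ℝ (Fin m)} (h : IsBRoot v) :
    (∃ (i : Fin m) (η : ℝ), (η = 1 ∨ η = -1) ∧ v = η • EuclideanSpace.single i 1) ∨
    (∃ (i j : Fin m) (α β : ℝ), i ≠ j ∧ (α = 1 ∨ α = -1) ∧ (β = 1 ∨ β = -1) ∧
      v = α • EuclideanSpace.single i 1 + β • EuclideanSpace.single j 1) := by
  rcases h with ⟨i, h | h⟩ | ⟨i, j, hij, h | h | h⟩
  · exact Or.inl ⟨i, 1, Or.inl rfl, by simpa using h⟩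
  · exact Or.inl ⟨i, -1, Or.inr rfl, by simpa using h⟩
  · exact Or.inr ⟨i, j, 1, 1, hij, Or.inl rfl, Or.inl rfl, by simpa using h⟩
  · exact Or.inr ⟨i, j, 1, -1, hij, Or.inl rfl, Or.inr rfl, by simpa [sub_eq_add_neg] using h⟩
  · exact Or.inr ⟨i, j, -1, -1, hij, Or.inr rfl, Or.inr rfl, by simp [h, neg_add, add_comm]⟩

lemma bn_tri {m : ℕ} {v : EuclideanSpace ℝ (Fin m)} (h : IsBRoot v) (l : Fin m) :
    v l = 0 ∨ v l = 1 ∨ v l = -1 := by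
  rcases bn_normal_form h with ⟨i, η, hη, rfl⟩ | ⟨i, j, α, β, hij, hα, hβ, rfl⟩
  · simp only [PiLp.smul_apply, EuclideanSpace.single_apply, smul_eq_mul]
    rcases hη with rfl | rfl <;> by_cases hl : l = i <;> simp [hl]
  · simp only [PiLp.add_apply, PiLp.smul_apply, EuclideanSpace.single_apply, smul_eq_mul]
    rcases hα with rfl | rfl <;> rcases hβ with rfl | rfl <;>
      by_cases hl : l = i <;> by_cases hl2 : l = j <;>
      simp_all

lemma bn_supp2 {m : ℕ} {v : EuclideanSpace ℝ (Fin m)} (h : IsBRoot v) {a b c : Fin m}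
    (hab : a ≠ b) (hac : a ≠ c) (hbc : b ≠ c) (ha : v a ≠ 0) (hb : v b ≠ 0) : v c = 0 := by
  rcases bn_normal_form h with ⟨i, η, hη, rfl⟩ | ⟨i, j, α, β, hij, hα, hβ, rfl⟩
  · exfalso
    have key : ∀ l : Fin m, (η • EuclideanSpace.single i (1:ℝ)) l ≠ 0 → l = i := by
      intro l hl
      by_contra hc
      exact hl (by simp [PiLp.smul_apply, EuclideanSpace.single_apply, hc])
    exact hab ((key a ha).trans (key b hb).symm)
  · have key : ∀ l : Fin m, l ≠ i → l ≠ j →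
        (α • EuclideanSpace.single i (1:ℝ) + β • EuclideanSpace.single j (1:ℝ)) l = 0 := by
      intro l h1 h2
      simp [PiLp.add_apply, PiLp.smul_apply, EuclideanSpace.single_apply, h1, h2]
    have mem : ∀ l : Fin m,
        (α • EuclideanSpace.single i (1:ℝ) + β • EuclideanSpace.single j (1:ℝ)) l ≠ 0 → l = i ∨ l = j := by
      intro l hl
      by_contra hc
      push_neg at hc
      exact hl (key l hc.1 hc.2)
    apply key
    · intro h
      rcases mem a ha with h1 | h1
      · exact hac (h1.trans h.symm)
      · rcases mem b hb with h2 | h2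
        · exact hbc (h2.trans h.symm)
        · exact hab (h1.trans h2.symm)
    · intro h
      rcases mem a ha with h1 | h1
      · rcases mem b hb with h2 | h2
        · exact hab (h1.trans h2.symm)
        · exact hbc (h2.trans h.symm)
      · exact hac (h1.trans h.symm)

lemma euclid_sum_apply {ι : Type*} {m : ℕ} (s : Finset ι) (F : ι → EuclideanSpace ℝ (Fin m))
    (i : Fin m) : (∑ k ∈ s, F k) i = ∑ k ∈ s, F k i := by
  induction s using Finset.cons_induction with
  | empty => rfl
  | cons a s ha ih => rw [Finset.sum_cons, Finset.sum_cons, PiLp.add_apply, ih]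

lemma sign_smul_mem {n : ℕ} (Λ : Submodule ℤ (EuclideanSpace ℝ (Fin n))) {η : ℝ}
    (hη : η = 1 ∨ η = -1) {x : EuclideanSpace ℝ (Fin n)} (hx : x ∈ Λ) : η • x ∈ Λ := by
  rcases hη with rfl | rfl
  · simpa using hx
  · rw [neg_smul, one_smul]
    exact Λ.neg_mem hx

lemma single_mem_span {n : ℕ} (f : Fin n → EuclideanSpace ℝ (Fin n))
    (hf_li : LinearIndependent ℝ f) (hf_root : ∀ k, IsBRoot (f k))
    (hf_indec : (gramGraph f).Connected)
    (hf_short : ∃ k i, f k = EuclideanSpace.single i 1 ∨ f k = -EuclideanSpace.single i 1) :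
    ∀ i, EuclideanSpace.single i (1:ℝ) ∈ Submodule.span ℤ (Set.range f) := by
  classical
  set Λ := Submodule.span ℤ (Set.range f) with hΛ
  have hfΛ : ∀ k, f k ∈ Λ := fun k => Submodule.subset_span ⟨k, rfl⟩
  set P : Fin n → Prop := fun k => ∀ i, f k i ≠ 0 → EuclideanSpace.single i (1:ℝ) ∈ Λ with hP
  -- propagation along an edge
  have step : ∀ a b, (gramGraph f).Adj a b → P a → P b := by
    intro a b hab hPa
    obtain ⟨hne, hinner⟩ := hab
    rw [euclid_inner] at hinner
    obtain ⟨v, -, hv⟩ := Finset.exists_ne_zero_of_sum_ne_zero hinner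
    have hva : f a v ≠ 0 := fun h => hv (by rw [h, zero_mul])
    have hvb : f b v ≠ 0 := fun h => hv (by rw [h, mul_zero])
    have hvΛ : EuclideanSpace.single v (1:ℝ) ∈ Λ := hPa v hva
    intro i hi
    rcases bn_normal_form (hf_root b) with ⟨j, η, hη, hfb⟩ | ⟨p, q, α, β, hpq, hα, hβ, hfb⟩
    · have hij : i = j := by
        by_contra hc
        exact hi (by simp [hfb, PiLp.smul_apply, EuclideanSpace.single_apply, hc])
      subst hij
      have : EuclideanSpace.single i (1:ℝ) = η • f b := by
        rw [hfb, smul_smul]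
        rcases hη with rfl | rfl <;> norm_num
      rw [this]
      exact sign_smul_mem Λ hη (hfΛ b)
    · -- both singles at p and q are in Λ
      have hsingles : EuclideanSpace.single p (1:ℝ) ∈ Λ ∧ EuclideanSpace.single q (1:ℝ) ∈ Λ := by
        have hvpq : v = p ∨ v = q := by
          by_contra hc
          push_neg at hc
          exact hvb (by simp [hfb, PiLp.add_apply, PiLp.smul_apply,
            EuclideanSpace.single_apply, hc.1, hc.2])
        rcases hvpq with rfl | rfl
        · refine ⟨hvΛ, ?_⟩
          have : EuclideanSpace.single q (1:ℝ) = β • f b + (-(β * α)) • EuclideanSpace.single v 1 := by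
            rw [hfb]
            rcases hα with rfl | rfl <;> rcases hβ with rfl | rfl <;> module
          rw [this]
          refine Λ.add_mem (sign_smul_mem Λ hβ (hfΛ b)) (sign_smul_mem Λ ?_ hvΛ)
          rcases hα with rfl | rfl <;> rcases hβ with rfl | rfl <;> norm_num
        · refine ⟨?_, hvΛ⟩
          have : EuclideanSpace.single p (1:ℝ) = α • f b + (-(α * β)) • EuclideanSpace.single v 1 := by
            rw [hfb]
            rcases hα with rfl | rfl <;> rcases hβ with rfl | rfl <;> module
          rw [this]
          refine Λ.add_mem (sign_smul_mem Λ hα (hfΛ b)) (sign_smul_mem Λ ?_ hvΛ)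
          rcases hα with rfl | rfl <;> rcases hβ with rfl | rfl <;> norm_num
      have hipq : i = p ∨ i = q := by
        by_contra hc
        push_neg at hc
        exact hi (by simp [hfb, PiLp.add_apply, PiLp.smul_apply,
          EuclideanSpace.single_apply, hc.1, hc.2])
      rcases hipq with rfl | rfl
      exacts [hsingles.1, hsingles.2]
  obtain ⟨k0, i0, hk0⟩ := hf_short
  have hPk0 : P k0 := by
    intro i hi
    have hii0 : i = i0 := by
      by_contra hc
      rcases hk0 with h | h <;>
        exact hi (by simp [h, EuclideanSpace.single_apply, hc])
    subst hii0
    rcases hk0 with h | h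
    · rw [← h]; exact hfΛ k0
    · have : EuclideanSpace.single i (1:ℝ) = -f k0 := by rw [h, neg_neg]
      rw [this]; exact Λ.neg_mem (hfΛ k0)
  have hall : ∀ k, P k := by
    intro k
    obtain ⟨w⟩ := hf_indec.preconnected k0 k
    clear hk0
    induction w with
    | nil => exact hPk0
    | cons h p ih => exact ih (step _ _ h hPk0)
  -- now conclude using real span
  intro i
  have hne : Nonempty (Fin n) := hf_indec.nonempty
  have hsp : Submodule.span ℝ (Set.range f) = ⊤ :=
    hf_li.span_eq_top_of_card_eq_finrank (by simp)
  have hmem : EuclideanSpace.single i (1:ℝ) ∈ Submodule.span ℝ (Set.range f) := by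
    rw [hsp]; trivial
  obtain ⟨c, hc⟩ := (Submodule.mem_span_range_iff_exists_fun ℝ).mp hmem
  have h1 : (1:ℝ) = ∑ k, c k * f k i := by
    have := congrArg (fun x : EuclideanSpace ℝ (Fin n) => x i) hc
    simp only [euclid_sum_apply, PiLp.smul_apply, smul_eq_mul] at this
    rw [EuclideanSpace.single_apply] at this
    rw [if_pos rfl] at this
    exact this.symm
  have : ∃ k, c k * f k i ≠ 0 := by
    by_contra hc2
    push_neg at hc2
    rw [Finset.sum_congr rfl (fun k _ => hc2 k)] at h1
    simp at h1
  obtain ⟨k, hk⟩ := this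
  exact hall k i (fun h => hk (by rw [h, mul_zero]))

lemma parity_lemma {n : ℕ} (f : Fin n → EuclideanSpace ℝ (Fin n))
    (hf_li : LinearIndependent ℝ f)
    (hspan : ∀ i, EuclideanSpace.single i (1:ℝ) ∈ Submodule.span ℤ (Set.range f))
    (m : Fin n → ℤ) (h : ∀ i, ∃ z : ℤ, ∑ a, (m a : ℝ) * f a i = 2 * z) :
    ∀ a, 2 ∣ m a := by
  classical
  choose z hz using h
  set x : EuclideanSpace ℝ (Fin n) := WithLp.toLp 2 (fun i => (z i : ℝ) : Fin n → ℝ) with hxdef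
  have hx : x ∈ Submodule.span ℤ (Set.range f) := by
    have hxe : x = ∑ i, z i • EuclideanSpace.single i (1:ℝ) := by
      ext j
      rw [euclid_sum_apply]
      rw [Finset.sum_eq_single j]
      · simp [EuclideanSpace.single_apply, hxdef]
      · intro b _ hbj
        simp [EuclideanSpace.single_apply, Ne.symm hbj]
      · simp
    rw [hxe]
    exact Submodule.sum_mem _ (fun i _ => Submodule.smul_mem _ _ (hspan i))
  obtain ⟨c, hc⟩ := (Submodule.mem_span_range_iff_exists_fun ℤ).mp hx
  have key : ∑ a, ((m a : ℝ) - 2 * (c a : ℝ)) • f a = 0 := by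
    have h2 : ∑ a, ((2:ℝ) * (c a : ℝ)) • f a = (2:ℝ) • x := by
      rw [← hc, Finset.smul_sum]
      refine Finset.sum_congr rfl (fun a _ => ?_)
      rw [← Int.cast_smul_eq_zsmul ℝ (c a) (f a), smul_smul]
    have h1 : ∑ a, ((m a : ℝ)) • f a = (2:ℝ) • x := by
      ext j
      rw [euclid_sum_apply]
      have : ((2:ℝ) • x) j = 2 * (z j : ℝ) := rfl
      rw [this, ← hz j]
      exact Finset.sum_congr rfl (fun a _ => rfl)
    simp only [sub_smul, Finset.sum_sub_distrib, h1, h2, sub_self]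
  intro a
  have hz2 := linearIndependent_iff'.mp hf_li Finset.univ _ key a (Finset.mem_univ a)
  have : (m a : ℝ) = ((2 * c a : ℤ) : ℝ) := by push_cast; linarith [sub_eq_zero.mp hz2]
  exact ⟨c a, Int.cast_injective this⟩

lemma shared_unique {n : ℕ} (f : Fin n → EuclideanSpace ℝ (Fin n))
    (htri : ∀ a i, f a i = 0 ∨ f a i = 1 ∨ f a i = -1)
    (hsupp : ∀ a, ∀ i j l : Fin n, i ≠ j → i ≠ l → j ≠ l → f a i ≠ 0 → f a j ≠ 0 → f a l = 0)
    (hpar : ∀ m : Fin n → ℤ, (∀ i, ∃ z : ℤ, ∑ a, (m a : ℝ) * f a i = 2 * z) → ∀ a, 2 ∣ m a)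
    {a b : Fin n} (hab : a ≠ b) {i j : Fin n}
    (hai : f a i ≠ 0) (hbi : f b i ≠ 0) (haj : f a j ≠ 0) (hbj : f b j ≠ 0) : i = j := by
  classical
  by_contra hij
  set m : Fin n → ℤ := fun x => if x = a then 1 else if x = b then 1 else 0 with hm
  have hsum : ∀ l, ∑ x, (m x : ℝ) * f x l = f a l + f b l := by
    intro l
    have : ∀ x, (m x : ℝ) * f x l =
        (if x = a then f a l else 0) + (if x = b then f b l else 0) := by
      intro x
      by_cases h1 : x = a
      · subst h1
        rw [if_neg hab]
        simp [hm]
      · by_cases h2 : x = b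
        · subst h2
          simp [hm, h1]
        · simp [hm, h1, h2]
    rw [Finset.sum_congr rfl (fun x _ => this x), Finset.sum_add_distrib,
      Finset.sum_ite_eq' Finset.univ a, Finset.sum_ite_eq' Finset.univ b]
    simp
  have heven : ∀ l, ∃ z : ℤ, ∑ x, (m x : ℝ) * f x l = 2 * z := by
    intro l
    rw [hsum l]
    have key : (f a l = 0 ↔ f b l = 0) := by
      constructor
      · intro h0
        by_contra hbl
        have hli : l ≠ i := fun h => (h ▸ h0 ▸ hai) rfl
        have hlj : l ≠ j := fun h => (h ▸ h0 ▸ haj) rfl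
        exact hbl (hsupp b i j l hij (Ne.symm hli) (Ne.symm hlj) hbi hbj)
      · intro h0
        by_contra hal
        have hli : l ≠ i := fun h => (h ▸ h0 ▸ hbi) rfl
        have hlj : l ≠ j := fun h => (h ▸ h0 ▸ hbj) rfl
        exact hal (hsupp a i j l hij (Ne.symm hli) (Ne.symm hlj) hai haj)
    by_cases h0 : f a l = 0
    · exact ⟨0, by rw [h0, key.mp h0]; norm_num⟩
    · have h0' : ¬ f b l = 0 := fun h => h0 (key.mpr h)
      rcases htri a l with h1 | h1 | h1
      · exact absurd h1 h0
      · rcases htri b l with h2 | h2 | h2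
        · exact absurd h2 h0'
        · exact ⟨1, by rw [h1, h2]; norm_num⟩
        · exact ⟨0, by rw [h1, h2]; norm_num⟩
      · rcases htri b l with h2 | h2 | h2
        · exact absurd h2 h0'
        · exact ⟨0, by rw [h1, h2]; norm_num⟩
        · exact ⟨-1, by rw [h1, h2]; norm_num⟩
  have := hpar m heven a
  rw [hm] at this
  simp at this

lemma inner_formula {n : ℕ} (f : Fin n → EuclideanSpace ℝ (Fin n))
    (htri : ∀ a i, f a i = 0 ∨ f a i = 1 ∨ f a i = -1)
    (hsupp : ∀ a, ∀ i j l : Fin n, i ≠ j → i ≠ l → j ≠ l → f a i ≠ 0 → f a j ≠ 0 → f a l = 0)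
    (hpar : ∀ m : Fin n → ℤ, (∀ i, ∃ z : ℤ, ∑ a, (m a : ℝ) * f a i = 2 * z) → ∀ a, 2 ∣ m a)
    {a b : Fin n} (hab : a ≠ b) {i : Fin n} (hai : f a i ≠ 0) (hbi : f b i ≠ 0) :
    ⟪f a, f b⟫ = f a i * f b i := by
  rw [euclid_inner]
  refine Finset.sum_eq_single i (fun j _ hji => ?_) (fun h => absurd (Finset.mem_univ i) h)
  by_contra hc
  have haj : f a j ≠ 0 := fun h => hc (by rw [h, zero_mul])
  have hbj : f b j ≠ 0 := fun h => hc (by rw [h, mul_zero])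
  exact hji (shared_unique f htri hsupp hpar hab haj hbj hai hbi)

lemma tau_eq {n : ℕ} (f : Fin n → EuclideanSpace ℝ (Fin n))
    (hsupp : ∀ a, ∀ i j l : Fin n, i ≠ j → i ≠ l → j ≠ l → f a i ≠ 0 → f a j ≠ 0 → f a l = 0)
    (a : Fin n) {i j : Fin n} (hij : i ≠ j) (hi : f a i ≠ 0) (hj : f a j ≠ 0) :
    (∏ l, if f a l = 0 then 1 else f a l) = f a i * f a j := by
  classical
  have h1 : (∏ l ∈ ({i, j} : Finset (Fin n)), if f a l = 0 then 1 else f a l)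
      = ∏ l, if f a l = 0 then 1 else f a l := by
    refine Finset.prod_subset (Finset.subset_univ _) (fun x _ hx => ?_)
    rw [if_pos]
    have hxi : i ≠ x := fun h => hx (by rw [← h]; simp)
    have hxj : j ≠ x := fun h => hx (by rw [← h]; simp)
    exact hsupp a i j x hij hxi hxj hi hj
  rw [← h1, Finset.prod_pair hij, if_neg hi, if_neg hj]

lemma core_lemma {n : ℕ} (f : Fin n → EuclideanSpace ℝ (Fin n))
    (htri : ∀ a i, f a i = 0 ∨ f a i = 1 ∨ f a i = -1)
    (hsupp : ∀ a, ∀ i j l : Fin n, i ≠ j → i ≠ l → j ≠ l → f a i ≠ 0 → f a j ≠ 0 → f a l = 0)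
    (hpar : ∀ m : Fin n → ℤ, (∀ i, ∃ z : ℤ, ∑ a, (m a : ℝ) * f a i = 2 * z) → ∀ a, 2 ∣ m a)
    (r : ℕ) (k : ℕ → Fin n)
    (hadj : ∀ t < r, (gramGraph f).Adj (k t) (k (t+1)))
    (hclosed : k r = k 0) :
    ∏ t ∈ Finset.range r, ⟪f (k t), f (k (t+1))⟫ = 1 := by
  classical
  rcases r with - | m
  · simp
  set K : Fin (m+1) → Fin n := fun t => k t.val with hKdef
  have hK : ∀ t : Fin (m+1), k (t.val + 1) = K (t + 1) := by
    intro t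
    by_cases h : t = Fin.last m
    · have h1 : (t + 1 : Fin (m+1)).val = 0 := by rw [Fin.val_add_one, if_pos h]
      have h2 : t.val = m := by rw [h]; rfl
      rw [hKdef]
      simp only [h1, h2]
      exact hclosed
    · have h1 : (t + 1 : Fin (m+1)).val = t.val + 1 := by rw [Fin.val_add_one, if_neg h]
      rw [hKdef]
      simp only [h1]
  have hAdj : ∀ t : Fin (m+1), (gramGraph f).Adj (K t) (K (t + 1)) := by
    intro t
    rw [← hK]
    exact hadj t.val t.isLt
  have hex : ∀ t : Fin (m+1), ∃ v, f (K t) v ≠ 0 ∧ f (K (t+1)) v ≠ 0 := by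
    intro t
    have h2 := (hAdj t).2
    rw [euclid_inner] at h2
    obtain ⟨v, -, hv⟩ := Finset.exists_ne_zero_of_sum_ne_zero h2
    exact ⟨v, fun h => hv (by rw [h, zero_mul]), fun h => hv (by rw [h, mul_zero])⟩
  choose V hV1 hV2 using hex
  have hne : ∀ t : Fin (m+1), K t ≠ K (t+1) := fun t => (hAdj t).1
  -- pass to Fin (m+1)-indexed product
  have hprod1 : ∏ t ∈ Finset.range (m+1), ⟪f (k t), f (k (t+1))⟫
      = ∏ t : Fin (m+1), (f (K t) (V t) * f (K (t+1)) (V t)) := by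
    rw [← Fin.prod_univ_eq_prod_range (fun t => ⟪f (k t), f (k (t+1))⟫) (m+1)]
    refine Finset.prod_congr rfl (fun t _ => ?_)
    rw [hK t]
    exact inner_formula f htri hsupp hpar (hne t) (hV1 t) (hV2 t)
  rw [hprod1]
  have hprod2 : ∏ t : Fin (m+1), (f (K t) (V t) * f (K (t+1)) (V t))
      = ∏ t : Fin (m+1), (f (K t) (V (t-1)) * f (K t) (V t)) := by
    rw [Finset.prod_mul_distrib, Finset.prod_mul_distrib]
    rw [mul_comm]
    congr 1
    exact Fintype.prod_equiv (Equiv.addRight (1 : Fin (m+1)))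
      (fun t => f (K (t+1)) (V t)) (fun s => f (K s) (V (s-1)))
      (fun t => by show f (K (t+1)) (V t) = f (K (t+1)) (V (t+1-1)); rw [add_sub_cancel_right])
  rw [hprod2]
  set τ : Fin n → ℝ := fun a => ∏ l, if f a l = 0 then 1 else f a l with hτ
  have hjump : ∀ t : Fin (m+1), V (t-1) ≠ V t →
      f (K t) (V (t-1)) ≠ 0 ∧ f (K t) (V t) ≠ 0 := by
    intro t ht
    constructor
    · have := hV2 (t-1)
      rwa [sub_add_cancel] at this
    · exact hV1 t
  have hfac : ∀ t : Fin (m+1), f (K t) (V (t-1)) * f (K t) (V t)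
      = if V (t-1) ≠ V t then τ (K t) else 1 := by
    intro t
    by_cases h : V (t-1) = V t
    · rw [if_neg (by simpa using h), h]
      rcases htri (K t) (V t) with h1 | h1 | h1
      · exact absurd h1 (hV1 t)
      · rw [h1]; norm_num
      · rw [h1]; norm_num
    · rw [if_pos h]
      exact (tau_eq f hsupp (K t) h (hjump t h).1 (hjump t h).2).symm
  rw [Finset.prod_congr rfl (fun t _ => hfac t), ← Finset.prod_filter]
  set J : Finset (Fin (m+1)) := Finset.filter (fun t => V (t-1) ≠ V t) Finset.univ with hJ
  -- parity of multiplicities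
  set mm : Fin n → ℤ := fun a => ((J.filter (fun t => K t = a)).card : ℤ) with hmm
  have hparity : ∀ a, 2 ∣ mm a := by
    refine hpar mm (fun i => ?_)
    -- integer values
    have hFz : ∀ a l, ∃ w : ℤ, (w : ℝ) = f a l ∧ (f a l ≠ 0 → (w : ZMod 2) = 1) := by
      intro a l
      rcases htri a l with h | h | h
      · exact ⟨0, by rw [h]; norm_num, fun hc => absurd h hc⟩
      · exact ⟨1, by rw [h]; norm_num, fun _ => by norm_num⟩
      · exact ⟨-1, by rw [h]; norm_num, fun _ => by decide⟩
    choose Fz hFz1 hFz2 using hFz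
    have hstep1 : ∑ a, (mm a : ℝ) * f a i = ∑ t ∈ J, f (K t) i := by
      rw [← Finset.sum_fiberwise J K (fun t => f (K t) i)]
      refine Finset.sum_congr rfl (fun a _ => ?_)
      rw [Finset.sum_congr rfl (fun t ht => by rw [(Finset.mem_filter.mp ht).2])]
      rw [Finset.sum_const, nsmul_eq_mul, hmm]
      push_cast
      ring
    have hstep2 : ∑ t ∈ J, f (K t) i = ((∑ t ∈ J, Fz (K t) i : ℤ) : ℝ) := by
      push_cast
      exact Finset.sum_congr rfl (fun t _ => (hFz1 (K t) i).symm)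
    have hdvd : (2 : ℤ) ∣ ∑ t ∈ J, Fz (K t) i := by
      have hcast : ((∑ t ∈ J, Fz (K t) i : ℤ) : ZMod 2) = 0 := by
        push_cast
        have hterm : ∀ t ∈ J, ((Fz (K t) i : ZMod 2))
            = (if V (t-1) = i then 1 else 0) + (if V t = i then 1 else 0) := by
          intro t ht
          have htj : V (t-1) ≠ V t := (Finset.mem_filter.mp ht).2
          by_cases h1 : V (t-1) = i
          · have h2 : V t ≠ i := fun h => htj (h1.trans h.symm)
            rw [if_pos h1, if_neg h2, add_zero]
            exact hFz2 (K t) i (h1 ▸ (hjump t htj).1)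
          · by_cases h2 : V t = i
            · rw [if_neg h1, if_pos h2, zero_add]
              exact hFz2 (K t) i (h2 ▸ (hjump t htj).2)
            · rw [if_neg h1, if_neg h2, add_zero]
              have h0 : f (K t) i = 0 := by
                refine hsupp (K t) (V (t-1)) (V t) i htj (fun h => h1 h) (fun h => h2 h)
                  (hjump t htj).1 (hjump t htj).2
              have := hFz1 (K t) i
              rw [h0] at this
              have : Fz (K t) i = 0 := by exact_mod_cast this
              rw [this]; norm_num
        rw [Finset.sum_congr rfl hterm, Finset.sum_add_distrib,
          Finset.sum_boole, Finset.sum_boole]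
        -- now card A + card B with A = B
        have hAB : (J.filter (fun t => V (t-1) = i)).card
            = (J.filter (fun t => V t = i)).card := by
          have htele : ∑ t : Fin (m+1), ((if V t = i then (1:ℤ) else 0)
              - (if V (t-1) = i then 1 else 0)) = 0 := by
            rw [Finset.sum_sub_distrib]
            rw [Fintype.sum_equiv (Equiv.subRight (1 : Fin (m+1)))
              (fun t => if V (t-1) = i then (1:ℤ) else 0)
              (fun s => if V s = i then (1:ℤ) else 0) (fun t => rfl)]
            rw [sub_self]
          have hpt : ∀ t : Fin (m+1), ((if V t = i then (1:ℤ) else 0)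
              - (if V (t-1) = i then 1 else 0))
              = (if (V t = i ∧ V (t-1) ≠ i) then (1:ℤ) else 0)
              - (if (V (t-1) = i ∧ V t ≠ i) then 1 else 0) := by
            intro t
            by_cases h1 : V t = i <;> by_cases h2 : V (t-1) = i <;>
              simp [h1, h2]
          rw [Finset.sum_congr rfl (fun t _ => hpt t), Finset.sum_sub_distrib,
            Finset.sum_boole, Finset.sum_boole, sub_eq_zero] at htele
          have hcard : (Finset.filter (fun t => V t = i ∧ V (t-1) ≠ i) Finset.univ).card
              = (Finset.filter (fun t => V (t-1) = i ∧ V t ≠ i) Finset.univ).card := by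
            exact_mod_cast htele
          have e1 : J.filter (fun t => V (t-1) = i)
              = Finset.filter (fun t => V (t-1) = i ∧ V t ≠ i) Finset.univ := by
            rw [hJ, Finset.filter_filter]
            refine Finset.filter_congr (fun t _ => ?_)
            constructor
            · rintro ⟨h1, h2⟩
              exact ⟨h2, fun h => h1 (h2.trans h.symm)⟩
            · rintro ⟨h1, h2⟩
              exact ⟨fun h => h2 (h.symm.trans h1), h1⟩
          have e2 : J.filter (fun t => V t = i)
              = Finset.filter (fun t => V t = i ∧ V (t-1) ≠ i) Finset.univ := by
            rw [hJ, Finset.filter_filter]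
            refine Finset.filter_congr (fun t _ => ?_)
            constructor
            · rintro ⟨h1, h2⟩
              exact ⟨h2, fun h => h1 (h.trans h2.symm)⟩
            · rintro ⟨h1, h2⟩
              exact ⟨fun h => h2 (h.trans h1), h1⟩
          rw [e1, e2, hcard]
        rw [hAB, CharTwo.add_self_eq_zero]
      exact (ZMod.intCast_zmod_eq_zero_iff_dvd _ 2).mp hcast
    obtain ⟨z, hzz⟩ := hdvd
    exact ⟨z, by rw [hstep1, hstep2, hzz]; push_cast; ring⟩
  -- final: product over J of τ ∘ K = 1
  rw [Finset.prod_comp τ K]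
  refine Finset.prod_eq_one (fun a ha => ?_)
  obtain ⟨t, htJ, htK⟩ := Finset.mem_image.mp ha
  have htj : V (t-1) ≠ V t := (Finset.mem_filter.mp htJ).2
  have hτa : τ a = 1 ∨ τ a = -1 := by
    rw [← htK]
    have htt : τ (K t) = f (K t) (V (t-1)) * f (K t) (V t) :=
      tau_eq f hsupp (K t) htj (hjump t htj).1 (hjump t htj).2
    rw [htt]
    rcases htri (K t) (V (t-1)) with h1 | h1 | h1
    · exact absurd h1 (hjump t htj).1
    all_goals rcases htri (K t) (V t) with h2 | h2 | h2
    · exact absurd h2 (hjump t htj).2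
    · left; rw [h1, h2]; norm_num
    · right; rw [h1, h2]; norm_num
    · exact absurd h2 (hjump t htj).2
    · right; rw [h1, h2]; norm_num
    · left; rw [h1, h2]; norm_num
  have heven : Even (J.filter (fun t => K t = a)).card := by
    have := hparity a
    rw [hmm] at this
    have h2 : (2:ℤ) ∣ ((J.filter (fun t => K t = a)).card : ℤ) := this
    have h3 : 2 ∣ (J.filter (fun t => K t = a)).card := by exact_mod_cast h2
    exact even_iff_two_dvd.mpr h3
  rcases hτa with h | h
  · rw [h, one_pow]
  · rw [h, Even.neg_one_pow heven]

noncomputable def wprod {n : ℕ} (c : Fin n → Fin n → ℝ) {G : SimpleGraph (Fin n)}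
    {a b : Fin n} (w : G.Walk a b) : ℝ :=
  ∏ t ∈ Finset.range w.length, c (w.getVert t) (w.getVert (t+1))

lemma wprod_nil {n : ℕ} (c : Fin n → Fin n → ℝ) {G : SimpleGraph (Fin n)} {a : Fin n} :
    wprod c (SimpleGraph.Walk.nil : G.Walk a a) = 1 := by
  unfold wprod
  simp

lemma wprod_cons {n : ℕ} (c : Fin n → Fin n → ℝ) {G : SimpleGraph (Fin n)} {a b d : Fin n}
    (h : G.Adj a b) (p : G.Walk b d) :
    wprod c (SimpleGraph.Walk.cons h p) = c a b * wprod c p := by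
  unfold wprod
  rw [SimpleGraph.Walk.length_cons, Finset.prod_range_succ']
  have h1 : ∀ t : ℕ, (SimpleGraph.Walk.cons h p).getVert (t+1) = p.getVert t :=
    fun t => SimpleGraph.Walk.getVert_cons_succ p h
  have key : ∀ t ∈ Finset.range p.length,
      c ((SimpleGraph.Walk.cons h p).getVert (t+1)) ((SimpleGraph.Walk.cons h p).getVert (t+1+1))
      = c (p.getVert t) (p.getVert (t+1)) := by
    intro t _
    rw [h1 t, h1 (t+1)]
  rw [Finset.prod_congr rfl key, SimpleGraph.Walk.getVert_zero, h1 0,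
    SimpleGraph.Walk.getVert_zero, mul_comm]

lemma wprod_append {n : ℕ} (c : Fin n → Fin n → ℝ) {G : SimpleGraph (Fin n)} {a b d : Fin n}
    (p : G.Walk a b) (q : G.Walk b d) :
    wprod c (p.append q) = wprod c p * wprod c q := by
  induction p with
  | nil => rw [wprod_nil, one_mul]; rfl
  | cons h p ih =>
      rw [SimpleGraph.Walk.cons_append, wprod_cons, wprod_cons, ih, mul_assoc]

lemma wprod_reverse {n : ℕ} (c : Fin n → Fin n → ℝ) {G : SimpleGraph (Fin n)}
    (hsymm : ∀ a b, c a b = c b a) {a b : Fin n} (p : G.Walk a b) :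
    wprod c p.reverse = wprod c p := by
  induction p with
  | nil => rfl
  | cons h p ih =>
      rw [SimpleGraph.Walk.reverse_cons, wprod_append, ih, wprod_cons, wprod_cons,
        wprod_nil]
      conv_lhs => rw [hsymm]
      ring
  
lemma wprod_pm {n : ℕ} (c : Fin n → Fin n → ℝ) {G : SimpleGraph (Fin n)}
    (hpm : ∀ a b, G.Adj a b → c a b = 1 ∨ c a b = -1) {a b : Fin n} (p : G.Walk a b) :
    wprod c p = 1 ∨ wprod c p = -1 := by
  induction p with
  | nil => left; rfl
  | cons h p ih =>
      rw [wprod_cons]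
      rcases hpm _ _ h with h1 | h1 <;> rcases ih with h2 | h2 <;> rw [h1, h2] <;> norm_num

lemma euclid_decomp {m : ℕ} (x : EuclideanSpace ℝ (Fin m)) :
    x = ∑ j, x j • EuclideanSpace.single j (1:ℝ) := by
  ext l
  rw [euclid_sum_apply, Finset.sum_eq_single l]
  · simp [EuclideanSpace.single_apply]
  · intro b _ hbl
    simp [EuclideanSpace.single_apply, Ne.symm hbl]
  · simp

lemma inner_single_single {m : ℕ} (i j : Fin m) :
    ⟪EuclideanSpace.single i (1:ℝ), EuclideanSpace.single j 1⟫ = if i = j then 1 else 0 := by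
  rw [euclid_inner, Finset.sum_eq_single j]
  · by_cases h : i = j <;> simp [EuclideanSpace.single_apply, h, eq_comm]
  · intro b _ hbj
    simp [EuclideanSpace.single_apply, hbj]
  · simp

lemma int_sum {ι : Type*} (s : Finset ι) (F : ι → ℝ) (h : ∀ x ∈ s, ∃ w : ℤ, (w:ℝ) = F x) :
    ∃ z : ℤ, (z:ℝ) = ∑ x ∈ s, F x := by
  classical
  choose w hw using h
  refine ⟨∑ x ∈ s.attach, w x.1 x.2, ?_⟩
  rw [← Finset.sum_attach s F]
  push_cast
  exact Finset.sum_congr rfl (fun x _ => hw x.1 x.2)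

lemma closed_wprod_one {n : ℕ} (f g : Fin n → EuclideanSpace ℝ (Fin n))
    (htri_f : ∀ a i, f a i = 0 ∨ f a i = 1 ∨ f a i = -1)
    (hsupp_f : ∀ a, ∀ i j l : Fin n, i ≠ j → i ≠ l → j ≠ l → f a i ≠ 0 → f a j ≠ 0 → f a l = 0)
    (hpar_f : ∀ m : Fin n → ℤ, (∀ i, ∃ z : ℤ, ∑ a, (m a : ℝ) * f a i = 2 * z) → ∀ a, 2 ∣ m a)
    (htri_g : ∀ a i, g a i = 0 ∨ g a i = 1 ∨ g a i = -1)
    (hsupp_g : ∀ a, ∀ i j l : Fin n, i ≠ j → i ≠ l → j ≠ l → g a i ≠ 0 → g a j ≠ 0 → g a l = 0)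
    (hpar_g : ∀ m : Fin n → ℤ, (∀ i, ∃ z : ℤ, ∑ a, (m a : ℝ) * g a i = 2 * z) → ∀ a, 2 ∣ m a)
    (hgraph : gramGraph f = gramGraph g)
    {v : Fin n} (w : (gramGraph f).Walk v v) :
    wprod (fun k l => ⟪f k, f l⟫ * ⟪g k, g l⟫) w = 1 := by
  unfold wprod
  have hbeta : ∀ t ∈ Finset.range w.length,
      (fun k l => ⟪f k, f l⟫ * ⟪g k, g l⟫) (w.getVert t) (w.getVert (t+1))
      = ⟪f (w.getVert t), f (w.getVert (t+1))⟫ * ⟪g (w.getVert t), g (w.getVert (t+1))⟫ :=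
    fun t _ => rfl
  rw [Finset.prod_congr rfl hbeta, Finset.prod_mul_distrib]
  have hcl : w.getVert w.length = w.getVert 0 := by
    rw [SimpleGraph.Walk.getVert_length, SimpleGraph.Walk.getVert_zero]
  have h1 := core_lemma f htri_f hsupp_f hpar_f w.length w.getVert
    (fun t ht => w.adj_getVert_succ ht) hcl
  have h2 := core_lemma g htri_g hsupp_g hpar_g w.length w.getVert
    (fun t ht => by rw [← hgraph]; exact w.adj_getVert_succ ht) hcl
  rw [h1, h2, mul_one]

lemma gram_sum_eq {n : ℕ} (u v : Fin n → EuclideanSpace ℝ (Fin n))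
    (h : ∀ k l, ⟪u k, u l⟫ = ⟪v k, v l⟫) (ci cj : Fin n → ℝ) :
    ⟪∑ k, ci k • u k, ∑ k, cj k • u k⟫ = ⟪∑ k, ci k • v k, ∑ k, cj k • v k⟫ := by
  rw [sum_inner, sum_inner]
  refine Finset.sum_congr rfl (fun k _ => ?_)
  rw [real_inner_smul_left, real_inner_smul_left, inner_sum, inner_sum]
  refine congrArg (fun x => ci k * x) (Finset.sum_congr rfl (fun l _ => ?_))
  rw [real_inner_smul_right, real_inner_smul_right, h k l]

/-- Every family of simplices generating `Bₙ` has a unique embedding into `Bₙ` up to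
the action of the Weyl group of `Bₙ` (the signed coordinate permutations
`x ↦ (δᵢ x_{σ(i)})`): two embeddings with the same unsigned Gram matrix differ by a
signed coordinate permutation and signs of the individual vectors. -/
theorem Bn_embedding_unique {n : ℕ}
    (f g : Fin n → EuclideanSpace ℝ (Fin n))
    (hf_li : LinearIndependent ℝ f) (hg_li : LinearIndependent ℝ g)
    (hf_root : ∀ k, IsBRoot (f k)) (hg_root : ∀ k, IsBRoot (g k))
    (hf_indec : (gramGraph f).Connected) (hg_indec : (gramGraph g).Connected)
    (hf_short : ∃ k i, f k = EuclideanSpace.single i 1 ∨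
      f k = -EuclideanSpace.single i 1)
    (hg_short : ∃ k i, g k = EuclideanSpace.single i 1 ∨
      g k = -EuclideanSpace.single i 1)
    (habs : ∀ k l, |⟪f k, f l⟫| = |⟪g k, g l⟫|) :
    ∃ (σ : Equiv.Perm (Fin n)) (δ : Fin n → ℝ) (ε : Fin n → ℝ),
      (∀ i, δ i = 1 ∨ δ i = -1) ∧ (∀ k, ε k = 1 ∨ ε k = -1) ∧
      ∀ k i, g k i = ε k * (δ i * f k (σ i)) := by
  classical
  have htri_f : ∀ a i, f a i = 0 ∨ f a i = 1 ∨ f a i = -1 := fun a i => bn_tri (hf_root a) i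
  have htri_g : ∀ a i, g a i = 0 ∨ g a i = 1 ∨ g a i = -1 := fun a i => bn_tri (hg_root a) i
  have hsupp_f : ∀ a, ∀ i j l : Fin n, i ≠ j → i ≠ l → j ≠ l → f a i ≠ 0 → f a j ≠ 0 → f a l = 0 :=
    fun a i j l hij hil hjl hi hj => bn_supp2 (hf_root a) hij hil hjl hi hj
  have hsupp_g : ∀ a, ∀ i j l : Fin n, i ≠ j → i ≠ l → j ≠ l → g a i ≠ 0 → g a j ≠ 0 → g a l = 0 :=
    fun a i j l hij hil hjl hi hj => bn_supp2 (hg_root a) hij hil hjl hi hj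
  have hspan_f := single_mem_span f hf_li hf_root hf_indec hf_short
  have hspan_g := single_mem_span g hg_li hg_root hg_indec hg_short
  have hpar_f := parity_lemma f hf_li hspan_f
  have hpar_g := parity_lemma g hg_li hspan_g
  have hgraph : gramGraph f = gramGraph g := by
    ext k l
    show (k ≠ l ∧ ⟪f k, f l⟫ ≠ 0) ↔ (k ≠ l ∧ ⟪g k, g l⟫ ≠ 0)
    constructor
    · rintro ⟨h1, h2⟩
      refine ⟨h1, fun h0 => h2 (abs_eq_zero.mp ?_)⟩
      rw [habs k l, h0, abs_zero]
    · rintro ⟨h1, h2⟩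
      refine ⟨h1, fun h0 => h2 (abs_eq_zero.mp ?_)⟩
      rw [← habs k l, h0, abs_zero]
  set c : Fin n → Fin n → ℝ := fun k l => ⟪f k, f l⟫ * ⟪g k, g l⟫ with hc
  have hcsymm : ∀ a b, c a b = c b a := by
    intro a b
    show ⟪f a, f b⟫ * ⟪g a, g b⟫ = ⟪f b, f a⟫ * ⟪g b, g a⟫
    rw [real_inner_comm (f a), real_inner_comm (g a)]
  have hfpm : ∀ a b, (gramGraph f).Adj a b → ⟪f a, f b⟫ = 1 ∨ ⟪f a, f b⟫ = -1 := by
    intro a b hab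
    obtain ⟨hne, hi⟩ := hab
    rw [euclid_inner] at hi
    obtain ⟨v, -, hv⟩ := Finset.exists_ne_zero_of_sum_ne_zero hi
    have hva : f a v ≠ 0 := fun h => hv (by rw [h, zero_mul])
    have hvb : f b v ≠ 0 := fun h => hv (by rw [h, mul_zero])
    rw [inner_formula f htri_f hsupp_f hpar_f hne hva hvb]
    rcases htri_f a v with h1 | h1 | h1
    · exact absurd h1 hva
    all_goals rcases htri_f b v with h2 | h2 | h2
    · exact absurd h2 hvb
    · left; rw [h1, h2]; norm_num
    · right; rw [h1, h2]; norm_num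
    · exact absurd h2 hvb
    · right; rw [h1, h2]; norm_num
    · left; rw [h1, h2]; norm_num
  have hgpm : ∀ a b, (gramGraph f).Adj a b → ⟪g a, g b⟫ = 1 ∨ ⟪g a, g b⟫ = -1 := by
    intro a b hab
    rw [hgraph] at hab
    obtain ⟨hne, hi⟩ := hab
    rw [euclid_inner] at hi
    obtain ⟨v, -, hv⟩ := Finset.exists_ne_zero_of_sum_ne_zero hi
    have hva : g a v ≠ 0 := fun h => hv (by rw [h, zero_mul])
    have hvb : g b v ≠ 0 := fun h => hv (by rw [h, mul_zero])
    rw [inner_formula g htri_g hsupp_g hpar_g hne hva hvb]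
    rcases htri_g a v with h1 | h1 | h1
    · exact absurd h1 hva
    all_goals rcases htri_g b v with h2 | h2 | h2
    · exact absurd h2 hvb
    · left; rw [h1, h2]; norm_num
    · right; rw [h1, h2]; norm_num
    · exact absurd h2 hvb
    · right; rw [h1, h2]; norm_num
    · left; rw [h1, h2]; norm_num
  have hcpm : ∀ a b, (gramGraph f).Adj a b → c a b = 1 ∨ c a b = -1 := by
    intro a b hab
    show ⟪f a, f b⟫ * ⟪g a, g b⟫ = 1 ∨ ⟪f a, f b⟫ * ⟪g a, g b⟫ = -1
    rcases hfpm a b hab with h1 | h1 <;> rcases hgpm a b hab with h2 | h2 <;>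
      rw [h1, h2] <;> norm_num
  -- epsilon
  obtain ⟨k0, i0, hk00⟩ := hf_short
  have hreach : ∀ k, Nonempty ((gramGraph f).Walk k0 k) := fun k => hf_indec.preconnected k0 k
  set ε : Fin n → ℝ := fun k => wprod c (hreach k).some with hεdef
  have hεpm : ∀ k, ε k = 1 ∨ ε k = -1 := fun k => wprod_pm c hcpm _
  have hεadj : ∀ k l, (gramGraph f).Adj k l → ε k * ε l = c k l := by
    intro k l hadj
    have h1 : wprod c ((hreach k).some.append
        (SimpleGraph.Walk.cons hadj ((hreach l).some.reverse))) = 1 :=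
      closed_wprod_one f g htri_f hsupp_f hpar_f htri_g hsupp_g hpar_g hgraph _
    rw [wprod_append, wprod_cons, wprod_reverse c hcsymm] at h1
    rw [show wprod c (hreach k).some = ε k from rfl,
      show wprod c (hreach l).some = ε l from rfl] at h1
    rcases hεpm k with h2 | h2 <;> rcases hεpm l with h3 | h3 <;>
      rw [h2, h3] at h1 ⊢ <;> linarith
  -- Gram equality for the corrected family
  set g' : Fin n → EuclideanSpace ℝ (Fin n) := fun k => ε k • g k with hg'
  have hGram : ∀ k l, ⟪g' k, g' l⟫ = ⟪f k, f l⟫ := by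
    intro k l
    show ⟪ε k • g k, ε l • g l⟫ = ⟪f k, f l⟫
    rw [real_inner_smul_left, real_inner_smul_right]
    by_cases hkl : k = l
    · subst hkl
      have hd : ⟪g k, g k⟫ = ⟪f k, f k⟫ := by
        have h3 := habs k k
        rw [abs_of_nonneg real_inner_self_nonneg,
          abs_of_nonneg real_inner_self_nonneg] at h3
        exact h3.symm
      rw [hd]
      rcases hεpm k with h | h <;> rw [h] <;> ring
    · by_cases hadj : (gramGraph f).Adj k l
      · have h1 := hεadj k l hadj
        have h2 : ⟪g k, g l⟫ * ⟪g k, g l⟫ = 1 := by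
          rcases hgpm k l hadj with h | h <;> rw [h] <;> norm_num
        have hcval : c k l = ⟪f k, f l⟫ * ⟪g k, g l⟫ := rfl
        rw [hcval] at h1
        calc ε k * (ε l * ⟪g k, g l⟫) = (ε k * ε l) * ⟪g k, g l⟫ := by ring
        _ = (⟪f k, f l⟫ * ⟪g k, g l⟫) * ⟪g k, g l⟫ := by rw [h1]
        _ = ⟪f k, f l⟫ * (⟪g k, g l⟫ * ⟪g k, g l⟫) := by ring
        _ = ⟪f k, f l⟫ := by rw [h2, mul_one]
      · have hf0 : ⟪f k, f l⟫ = 0 := by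
          by_contra h0
          exact hadj ⟨hkl, h0⟩
        have hg0 : ⟪g k, g l⟫ = 0 := by
          have := habs k l
          rw [hf0, abs_zero] at this
          exact abs_eq_zero.mp this.symm
        rw [hf0, hg0]
        ring
  -- the linear map T
  have hne : Nonempty (Fin n) := hf_indec.nonempty
  have hspanT : ⊤ ≤ Submodule.span ℝ (Set.range f) := by
    rw [hf_li.span_eq_top_of_card_eq_finrank (by simp)]
  set b : Module.Basis (Fin n) ℝ (EuclideanSpace ℝ (Fin n)) := Module.Basis.mk hf_li hspanT with hb
  set T := b.constr ℝ g' with hT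
  have hTf : ∀ k, T (f k) = g' k := by
    intro k
    have hbk : b k = f k := Module.Basis.mk_apply hf_li hspanT k
    rw [← hbk]
    exact b.constr_basis ℝ g' k
  have hTsum : ∀ cc : Fin n → ℝ, T (∑ k, cc k • f k) = ∑ k, cc k • g' k := by
    intro cc
    rw [map_sum]
    exact Finset.sum_congr rfl (fun k _ => by rw [map_smul, hTf])
  have hrep : ∀ i, ∃ cc : Fin n → ℝ, (∑ k, cc k • f k = EuclideanSpace.single i 1) ∧
      (∀ k, ∃ z : ℤ, (z:ℝ) = cc k) := by
    intro i
    obtain ⟨cz, hcz⟩ := (Submodule.mem_span_range_iff_exists_fun ℤ).mp (hspan_f i)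
    refine ⟨fun k => (cz k : ℝ), ?_, fun k => ⟨cz k, rfl⟩⟩
    rw [← hcz]
    exact Finset.sum_congr rfl (fun k _ => Int.cast_smul_eq_zsmul ℝ _ _)
  choose crep hcrep1 hcrep2 using hrep
  set u : Fin n → EuclideanSpace ℝ (Fin n) := fun i => T (EuclideanSpace.single i 1) with hu
  have hu_eq : ∀ i, u i = ∑ k, crep i k • g' k := by
    intro i
    show T (EuclideanSpace.single i 1) = _
    rw [← hcrep1 i, hTsum]
  have hu_inner : ∀ i j, ⟪u i, u j⟫ = if i = j then 1 else 0 := by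
    intro i j
    rw [hu_eq, hu_eq]
    rw [gram_sum_eq g' f hGram (crep i) (crep j), hcrep1 i, hcrep1 j, inner_single_single]
  have hu_int : ∀ i j, ∃ z : ℤ, (z:ℝ) = u i j := by
    intro i j
    rw [hu_eq, euclid_sum_apply]
    refine int_sum Finset.univ _ (fun k _ => ?_)
    obtain ⟨zc, hzc⟩ := hcrep2 i k
    have hterm : (crep i k • g' k) j = crep i k * (ε k * g k j) := rfl
    have hw : ∃ w : ℤ, (w:ℝ) = ε k * g k j := by
      rcases hεpm k with he | he <;> rcases htri_g k j with ht | ht | ht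
      · exact ⟨0, by rw [he, ht]; norm_num⟩
      · exact ⟨1, by rw [he, ht]; norm_num⟩
      · exact ⟨-1, by rw [he, ht]; norm_num⟩
      · exact ⟨0, by rw [he, ht]; norm_num⟩
      · exact ⟨-1, by rw [he, ht]; norm_num⟩
      · exact ⟨1, by rw [he, ht]; norm_num⟩
    obtain ⟨w, hww⟩ := hw
    refine ⟨zc * w, ?_⟩
    rw [hterm]
    push_cast
    rw [hzc, hww]
  have hunit : ∀ i, ∃ j, (u i j = 1 ∨ u i j = -1) ∧ ∀ l, l ≠ j → u i l = 0 := by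
    intro i
    choose z hz using hu_int i
    have hsum : ∑ j, z j * z j = 1 := by
      have h1 : ⟪u i, u i⟫ = 1 := by rw [hu_inner i i, if_pos rfl]
      rw [euclid_inner] at h1
      have h2 : ((∑ j, z j * z j : ℤ) : ℝ) = 1 := by
        push_cast
        rw [Finset.sum_congr rfl (fun j _ => by rw [hz j])]
        exact h1
      exact_mod_cast h2
    have hex : ∃ j, z j ≠ 0 := by
      by_contra hcon
      push_neg at hcon
      rw [Finset.sum_congr rfl (fun j _ => by rw [hcon j])] at hsum
      simp at hsum
    obtain ⟨j, hj⟩ := hex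
    have h1 : z j * z j = 1 := by
      have hle : z j * z j ≤ 1 :=
        hsum ▸ Finset.single_le_sum (fun l _ => mul_self_nonneg (z l)) (Finset.mem_univ j)
      have hge : 1 ≤ z j * z j := by
        rcases lt_trichotomy (z j) 0 with h | h | h
        · nlinarith
        · exact absurd h hj
        · nlinarith
      omega
    refine ⟨j, ?_, ?_⟩
    · rcases mul_self_eq_one_iff.mp h1 with h | h
      · left; rw [← hz j, h]; norm_num
      · right; rw [← hz j, h]; norm_num
    · intro l hl
      have htot : z j * z j + ∑ x ∈ Finset.univ.erase j, z x * z x = ∑ x, z x * z x :=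
        Finset.add_sum_erase Finset.univ (fun x => z x * z x) (Finset.mem_univ j)
      rw [hsum, h1] at htot
      have hrest : ∑ x ∈ Finset.univ.erase j, z x * z x = 0 := by linarith
      have h0 : z l * z l = 0 :=
        (Finset.sum_eq_zero_iff_of_nonneg (fun x _ => mul_self_nonneg (z x))).mp hrest l
          (Finset.mem_erase.mpr ⟨hl, Finset.mem_univ l⟩)
      rw [← hz l, mul_self_eq_zero.mp h0]
      norm_num
  choose ρ hρ1 hρ2 using hunit
  have hρinj : Function.Injective ρ := by
    intro i i' hρeq
    by_contra hii
    have h0 : ⟪u i, u i'⟫ = 0 := by rw [hu_inner, if_neg hii]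
    rw [euclid_inner, Finset.sum_eq_single (ρ i)] at h0
    · have hui' : u i' (ρ i) = u i' (ρ i') := by rw [hρeq]
      rcases hρ1 i with h1 | h1 <;> rcases hρ1 i' with h2 | h2 <;>
        rw [h1, hui', h2] at h0 <;> norm_num at h0
    · intro l _ hl
      rw [hρ2 i l hl, zero_mul]
    · exact fun hh => absurd (Finset.mem_univ _) hh
  set σ0 : Equiv.Perm (Fin n) := Equiv.ofBijective ρ (Finite.injective_iff_bijective.mp hρinj)
    with hσ0
  have hσρ : ∀ x, σ0 x = ρ x := fun x => rfl
  refine ⟨σ0.symm, fun i => u (σ0.symm i) i, ε, ?_, hεpm, ?_⟩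
  · intro i
    have hρi : ρ (σ0.symm i) = i := by
      rw [← hσρ]
      exact σ0.apply_symm_apply i
    show u (σ0.symm i) i = 1 ∨ u (σ0.symm i) i = -1
    rcases hρ1 (σ0.symm i) with h | h <;> rw [hρi] at h
    exacts [Or.inl h, Or.inr h]
  · intro k i
    show g k i = ε k * (u (σ0.symm i) i * f k (σ0.symm i))
    have hgk : g k = ε k • g' k := by
      show g k = ε k • (ε k • g k)
      rw [smul_smul]
      rcases hεpm k with h | h <;> rw [h] <;> norm_num
    have hTfk : g' k = ∑ j, f k j • u j := by
      rw [← hTf k]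
      conv_lhs => rw [euclid_decomp (f k)]
      rw [map_sum]
      exact Finset.sum_congr rfl (fun j _ => by rw [map_smul])
    have hcoord : g' k i = f k (σ0.symm i) * u (σ0.symm i) i := by
      rw [hTfk, euclid_sum_apply, Finset.sum_eq_single (σ0.symm i)]
      · rfl
      · intro j _ hj
        have hiρ : i ≠ ρ j := by
          intro hh
          apply hj
          rw [hh, ← hσρ j]
          exact (σ0.symm_apply_apply j).symm
        have hu0 : u j i = 0 := hρ2 j i hiρ
        show f k j • u j i = 0
        rw [hu0, smul_zero]
      · exact fun hh => absurd (Finset.mem_univ _) hh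
    have : g k i = ε k * g' k i := by
      rw [hgk]
      rfl
    rw [this, hcoord]
    ring
end

section
/- Let (T₁, m₁) and (T₂, m₂) be trees on the vertex set Fin n, each with one marked vertex m₁ resp. m₂. Associate to a marked tree (T, m) the family of vectors in EuclideanSpace ℝ (Fin n) consisting of the vector e_m together with one vector e_i − e_j for each edge {i, j} of T. Then the following are equivalent: (1) there is a graph isomorphism from T₁ to T₂ taking m₁ to m₂; (2) there exist a linear isometry W of EuclideanSpace ℝ (Fin n), a bijection φ from the vector family of (T₁, m₁) to that of (T₂, m₂), and signs ε_v ∈ {−1, 1} such that φ(v) = ε_v · W(v) for every vector v of the first family. (The families generating B_n are in one-to-one correspondence with the trees with n vertices exactly one of which is marked.) -/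
lemma Bn_norm_sq_eq_sum {n : ℕ} (x : EuclideanSpace ℝ (Fin n)) :
    ‖x‖ ^ 2 = ∑ i, x i ^ 2 := by
  rw [EuclideanSpace.norm_eq, Real.sq_sqrt (by positivity)]
  simp [Real.norm_eq_abs, sq_abs]

lemma Bn_unit_int_vec {n : ℕ} (x : EuclideanSpace ℝ (Fin n)) (hx : ‖x‖ = 1)
    (hz : ∀ i, ∃ z : ℤ, x i = z) :
    ∃ w : Fin n, (x w = 1 ∨ x w = -1) ∧ ∀ u, u ≠ w → x u = 0 := by
  choose z hzz using hz
  have hsum : ∑ i, x i ^ 2 = 1 := by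
    rw [← Bn_norm_sq_eq_sum, hx]; norm_num
  have hsumZ : ∑ i, z i ^ 2 = (1 : ℤ) := by
    have : ((∑ i, z i ^ 2 : ℤ) : ℝ) = ∑ i, x i ^ 2 := by
      push_cast
      exact Finset.sum_congr rfl fun i _ => by rw [hzz i]
    exact_mod_cast this.trans hsum
  have hex : ∃ w, z w ≠ 0 := by
    by_contra h
    push_neg at h
    simp [h] at hsumZ
  obtain ⟨w, hw⟩ := hex
  have h1 : z w ^ 2 + ∑ u ∈ Finset.univ.erase w, z u ^ 2 = 1 := by
    rw [Finset.add_sum_erase _ (fun u => z u ^ 2) (Finset.mem_univ w)]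
    exact hsumZ
  have h2 : (1 : ℤ) ≤ z w ^ 2 := by
    have := Int.one_le_abs (by simpa using hw)
    nlinarith [sq_abs (z w)]
  have h3 : (0 : ℤ) ≤ ∑ u ∈ Finset.univ.erase w, z u ^ 2 :=
    Finset.sum_nonneg fun u _ => sq_nonneg _
  have hzw : z w ^ 2 = 1 := by omega
  have hrest : ∑ u ∈ Finset.univ.erase w, z u ^ 2 = 0 := by omega
  refine ⟨w, ?_, ?_⟩
  · have : (z w - 1) * (z w + 1) = 0 := by ring_nf; omega
    rcases mul_eq_zero.mp this with h | h
    · left; rw [hzz w, show z w = 1 by omega]; norm_num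
    · right; rw [hzz w, show z w = -1 by omega]; norm_num
  · intro u hu
    have := (Finset.sum_eq_zero_iff_of_nonneg (fun u _ => sq_nonneg (z u))).mp hrest u
      (Finset.mem_erase.mpr ⟨hu, Finset.mem_univ u⟩)
    rw [hzz u]
    rw [show z u = 0 from pow_eq_zero_iff (n := 2) (by norm_num) |>.mp this]; simp

lemma Bn_norm_single_sub {n : ℕ} {k l : Fin n} (h : k ≠ l) :
    ‖(EuclideanSpace.single k (1:ℝ) - EuclideanSpace.single l 1 : EuclideanSpace ℝ (Fin n))‖ ^ 2 = 2 := by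
  rw [Bn_norm_sq_eq_sum]
  have : ∀ i : Fin n, ((EuclideanSpace.single k (1:ℝ) - EuclideanSpace.single l 1 : EuclideanSpace ℝ (Fin n)) i) ^ 2
      = (if i = k then 1 else 0) + (if i = l then 1 else 0) := by
    intro i
    simp only [PiLp.sub_apply, EuclideanSpace.single_apply]
    rcases eq_or_ne i k with rfl | hik <;> rcases eq_or_ne i l with rfl | hil <;>
      simp_all <;> norm_num
  rw [Finset.sum_congr rfl fun i _ => this i, Finset.sum_add_distrib]
  simp
  norm_num

lemma Bn_piLpCongrLeft_single {n : ℕ} (φ : Fin n ≃ Fin n) (v : Fin n) :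
    (LinearIsometryEquiv.piLpCongrLeft 2 ℝ ℝ φ) (EuclideanSpace.single v 1)
      = EuclideanSpace.single (φ v) 1 := by
  ext i
  simp only [LinearIsometryEquiv.piLpCongrLeft_apply, Equiv.piCongrLeft'_apply,
    EuclideanSpace.single_apply]
  rcases eq_or_ne i (φ v) with rfl | h
  · simp
  · rw [if_neg h, if_neg fun hc => h (by rw [← hc, Equiv.apply_symm_apply])]

/-- The families generating `Bₙ` are in one-to-one correspondence with the trees with
`n` vertices exactly one of which is marked: two marked trees on `Fin n` are
isomorphic by a marking-preserving isomorphism if and only if their associated vector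
families (the vector `e_m` for the marked vertex `m` together with one vector
`eᵢ - eⱼ` per edge) agree up to a linear isometry, a bijection of the index sets,
and signs. -/
theorem Bn_families_iff_marked_trees {n : ℕ}
    (T₁ T₂ : SimpleGraph (Fin n)) (m₁ m₂ : Fin n)
    (h₁ : T₁.IsTree) (h₂ : T₂.IsTree)
    (vec₁ : T₁.edgeSet → EuclideanSpace ℝ (Fin n))
    (vec₂ : T₂.edgeSet → EuclideanSpace ℝ (Fin n))
    (hvec₁ : ∀ e : T₁.edgeSet, ∃ i j : Fin n,
      (e : Sym2 (Fin n)) = s(i, j) ∧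
      vec₁ e = EuclideanSpace.single i 1 - EuclideanSpace.single j 1)
    (hvec₂ : ∀ e : T₂.edgeSet, ∃ i j : Fin n,
      (e : Sym2 (Fin n)) = s(i, j) ∧
      vec₂ e = EuclideanSpace.single i 1 - EuclideanSpace.single j 1) :
    (∃ φ : T₁ ≃g T₂, φ m₁ = m₂) ↔
      ∃ (W : EuclideanSpace ℝ (Fin n) ≃ₗᵢ[ℝ] EuclideanSpace ℝ (Fin n))
        (φ : Option T₁.edgeSet ≃ Option T₂.edgeSet)
        (ε : Option T₁.edgeSet → ℝ),
        (∀ v, ε v = 1 ∨ ε v = -1) ∧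
        ∀ v : Option T₁.edgeSet,
          (φ v).elim (EuclideanSpace.single m₂ 1) vec₂ =
            ε v • W (v.elim (EuclideanSpace.single m₁ 1) vec₁) := by
  constructor
  · rintro ⟨φ, hφm⟩
    classical
    set W := LinearIsometryEquiv.piLpCongrLeft 2 ℝ ℝ φ.toEquiv with hW
    have key : ∀ v : Option T₁.edgeSet, ∃ c : ℝ, (c = 1 ∨ c = -1) ∧
        ((Equiv.optionCongr φ.mapEdgeSet) v).elim (EuclideanSpace.single m₂ 1) vec₂ =
          c • W (v.elim (EuclideanSpace.single m₁ 1) vec₁) := by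
      rintro (_ | e)
      · refine ⟨1, Or.inl rfl, ?_⟩
        simp only [Equiv.optionCongr_apply, Option.map_none, Option.elim_none, one_smul, hW,
          Bn_piLpCongrLeft_single]
        rw [show φ.toEquiv m₁ = m₂ from hφm]
      · obtain ⟨i, j, hij, hv1⟩ := hvec₁ e
        obtain ⟨k, l, hkl, hv2⟩ := hvec₂ (φ.mapEdgeSet e)
        have hmap : (↑(φ.mapEdgeSet e) : Sym2 (Fin n)) = s(φ i, φ j) := by
          simp [SimpleGraph.Iso.mapEdgeSet, SimpleGraph.Hom.mapEdgeSet, hij]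
        have heq2 : s(k, l) = s((φ i : Fin n), (φ j : Fin n)) := hkl ▸ hmap
        have hWe : W (vec₁ e) = EuclideanSpace.single (φ i) 1 - EuclideanSpace.single (φ j) 1 := by
          rw [hv1, map_sub, hW, Bn_piLpCongrLeft_single, Bn_piLpCongrLeft_single]
          rfl
        rcases Sym2.eq_iff.mp heq2 with ⟨hk, hl⟩ | ⟨hk, hl⟩
        · refine ⟨1, Or.inl rfl, ?_⟩
          simp only [Equiv.optionCongr_apply, Option.map_some, Option.elim_some, one_smul,
            hv2, hk, hl, hWe]
        · refine ⟨-1, Or.inr rfl, ?_⟩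
          simp only [Equiv.optionCongr_apply, Option.map_some, Option.elim_some,
            hv2, hk, hl, hWe, neg_smul, one_smul]
          abel
    choose ε hε1 hε2 using key
    exact ⟨W, Equiv.optionCongr φ.mapEdgeSet, ε, hε1, hε2⟩
  · rintro ⟨W, φ, ε, hε, heq⟩
    classical
    have hε0 : ∀ v, ε v ≠ 0 := fun v => by rcases hε v with h | h <;> rw [h] <;> norm_num
    have hεs : ∀ v (x : EuclideanSpace ℝ (Fin n)), ε v • ε v • x = x := fun v x => by
      rcases hε v with h | h <;> rw [h] <;> simp
    -- φ maps none to none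
    have hnone : φ none = none := by
      cases hφn : φ none with
      | none => rfl
      | some f =>
        exfalso
        have h0 := heq none
        rw [hφn] at h0
        obtain ⟨k, l, hkl, hv2⟩ := hvec₂ f
        have hklne : k ≠ l := by
          have : T₂.Adj k l := by rw [← SimpleGraph.mem_edgeSet, ← hkl]; exact f.2
          exact this.ne
        have h2 : ‖(Option.some f).elim (EuclideanSpace.single m₂ 1) vec₂‖ ^ 2 = 2 := by
          simp only [Option.elim_some, hv2]; exact Bn_norm_single_sub hklne
        have h1 : ‖ε none • W ((none : Option T₁.edgeSet).elim (EuclideanSpace.single m₁ 1) vec₁)‖ ^ 2 = 1 := by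
          rw [norm_smul, LinearIsometryEquiv.norm_map]
          simp only [Option.elim_none, EuclideanSpace.norm_single, norm_one, mul_one]
          rcases hε none with h | h <;> rw [h] <;> norm_num
        rw [h0, h1] at h2
        norm_num at h2
    have hWm : W (EuclideanSpace.single m₁ 1) = ε none • EuclideanSpace.single m₂ 1 := by
      have h0 := heq none
      rw [hnone] at h0
      simp only [Option.elim_none] at h0
      rw [← hεs none (W (EuclideanSpace.single m₁ 1)), ← h0]
    have hmapE : ∀ e : T₁.edgeSet, ∃ f : T₂.edgeSet,
        W (vec₁ e) = ε (some e) • vec₂ f := by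
      intro e
      cases hφe : φ (some e) with
      | none =>
        exfalso
        have := φ.injective (hφe.trans hnone.symm)
        simp at this
      | some f =>
        refine ⟨f, ?_⟩
        have h0 := heq (some e)
        rw [hφe] at h0
        simp only [Option.elim_some] at h0
        rw [← hεs (some e) (W (vec₁ e)), ← h0]
    -- integrality of coordinates
    set Zv : EuclideanSpace ℝ (Fin n) → Prop := fun x => ∀ i, ∃ z : ℤ, x i = z with hZv
    have Zv_smul : ∀ v x, Zv x → Zv (ε v • x) := by
      intro v x hx i
      obtain ⟨z, hz⟩ := hx i
      rcases hε v with h | h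
      · exact ⟨z, by rw [PiLp.smul_apply, h, hz]; simp⟩
      · exact ⟨-z, by rw [PiLp.smul_apply, h, hz, smul_eq_mul]; push_cast; ring⟩
    have Zv_pair : ∀ k l : Fin n, Zv (EuclideanSpace.single k 1 - EuclideanSpace.single l 1) := by
      intro k l i
      refine ⟨(if i = k then 1 else 0) - (if i = l then 1 else 0), ?_⟩
      rw [PiLp.sub_apply, EuclideanSpace.single_apply, EuclideanSpace.single_apply]
      push_cast
      split_ifs <;> norm_num
    have Zv2 : ∀ f : T₂.edgeSet, Zv (vec₂ f) := by
      intro f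
      obtain ⟨k, l, hkl, hv2⟩ := hvec₂ f
      rw [hv2]; exact Zv_pair k l
    have hWint : ∀ v : Fin n, Zv (W (EuclideanSpace.single v 1)) := by
      have step : ∀ (a b : Fin n), T₁.Walk a b →
          Zv (W (EuclideanSpace.single a 1)) → Zv (W (EuclideanSpace.single b 1)) := by
        intro a b w
        induction w with
        | nil => exact id
        | @cons u c b hadj p ih =>
          intro ha
          apply ih
          have hedge : s(u, c) ∈ T₁.edgeSet := hadj
          set e : T₁.edgeSet := ⟨s(u, c), hedge⟩ with he
          obtain ⟨i, j, hij, hv1⟩ := hvec₁ e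
          have hZe : Zv (W (vec₁ e)) := by
            obtain ⟨f, hWe⟩ := hmapE e
            rw [hWe]; exact Zv_smul _ _ (Zv2 f)
          have hij' : s(u, c) = s(i, j) := hij
          have hkey : EuclideanSpace.single c (1:ℝ) = EuclideanSpace.single u 1 - vec₁ e ∨
              EuclideanSpace.single c (1:ℝ) = EuclideanSpace.single u 1 + vec₁ e := by
            rcases Sym2.eq_iff.mp hij' with ⟨hui, hcj⟩ | ⟨huj, hci⟩
            · left; rw [hv1, ← hui, ← hcj]; abel
            · right; rw [hv1, ← huj, ← hci]; abel
          intro idx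
          obtain ⟨z1, hz1⟩ := ha idx
          obtain ⟨z2, hz2⟩ := hZe idx
          rcases hkey with hk | hk
          · refine ⟨z1 - z2, ?_⟩
            rw [hk, map_sub, PiLp.sub_apply, hz1, hz2]; push_cast; ring
          · refine ⟨z1 + z2, ?_⟩
            rw [hk, map_add, PiLp.add_apply, hz1, hz2]; push_cast; ring
      intro v
      obtain ⟨w⟩ := (h₁.isConnected.preconnected m₁ v)
      apply step m₁ v w
      intro i
      rw [hWm]
      exact Zv_smul none _ (fun idx => ⟨if idx = m₂ then 1 else 0, by
        rw [EuclideanSpace.single_apply]; split_ifs <;> norm_num⟩) i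
    -- extract the permutation
    have hform : ∀ v : Fin n, ∃ w, (W (EuclideanSpace.single v 1) w = 1 ∨
        W (EuclideanSpace.single v 1) w = -1) ∧ ∀ u, u ≠ w → W (EuclideanSpace.single v 1) u = 0 := by
      intro v
      exact Bn_unit_int_vec _ (by rw [LinearIsometryEquiv.norm_map]; simp) (hWint v)
    choose ψ hψs hψ0 using hform
    have hsne : ∀ v, W (EuclideanSpace.single v 1) (ψ v) ≠ 0 := fun v => by
      rcases hψs v with h | h <;> rw [h] <;> norm_num
    have hψinj : Function.Injective ψ := by
      intro u v huv
      by_contra hne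
      set a := W (EuclideanSpace.single v 1) (ψ u) with hadef
      set b := W (EuclideanSpace.single u 1) (ψ u) with hbdef
      have hz : W (a • EuclideanSpace.single u 1 - b • EuclideanSpace.single v 1) = 0 := by
        rw [map_sub, map_smul, map_smul]
        ext i
        rw [PiLp.sub_apply, PiLp.smul_apply, PiLp.smul_apply]
        rcases eq_or_ne i (ψ u) with rfl | hi
        · simp [smul_eq_mul]; ring
        · rw [hψ0 u i hi, hψ0 v i (huv ▸ hi)]
          simp
      have hz2 : a • EuclideanSpace.single u (1:ℝ) - b • EuclideanSpace.single v 1 = 0 :=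
        (LinearIsometryEquiv.map_eq_zero_iff W).mp hz
      have h3 : (a • EuclideanSpace.single u (1:ℝ) - b • EuclideanSpace.single v 1 :
          EuclideanSpace ℝ (Fin n)) u = 0 := by rw [hz2]; rfl
      rw [PiLp.sub_apply, PiLp.smul_apply, PiLp.smul_apply, EuclideanSpace.single_apply,
        EuclideanSpace.single_apply, if_pos rfl, if_neg hne, smul_eq_mul, smul_eq_mul] at h3
      have ha : a ≠ 0 := by rw [hadef, huv]; exact hsne v
      apply ha
      linarith
    have hψm : ψ m₁ = m₂ := by
      by_contra hc
      have h0 : W (EuclideanSpace.single m₁ 1) m₂ = 0 := hψ0 m₁ m₂ (fun h => hc h.symm)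
      rw [hWm, PiLp.smul_apply, EuclideanSpace.single_apply, if_pos rfl, smul_eq_mul,
        mul_one] at h0
      exact hε0 none h0
    -- adjacency is preserved
    have hadj : ∀ a b : Fin n, T₁.Adj a b → T₂.Adj (ψ a) (ψ b) := by
      intro a b hab
      have hedge : s(a, b) ∈ T₁.edgeSet := hab
      set e : T₁.edgeSet := ⟨s(a, b), hedge⟩ with he
      obtain ⟨f, hWe⟩ := hmapE e
      obtain ⟨i, j, hij, hv1⟩ := hvec₁ e
      obtain ⟨k, l, hkl, hv2⟩ := hvec₂ f
      have habne : a ≠ b := hab.ne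
      have hψne : ψ a ≠ ψ b := fun h => habne (hψinj h)
      have hij' : s(a, b) = s(i, j) := hij
      have hv1' : vec₁ e = EuclideanSpace.single a 1 - EuclideanSpace.single b 1 ∨
          vec₁ e = EuclideanSpace.single b 1 - EuclideanSpace.single a 1 := by
        rcases Sym2.eq_iff.mp hij' with ⟨hai, hbj⟩ | ⟨haj, hbi⟩
        · left; rw [hv1, ← hai, ← hbj]
        · right; rw [hv1, ← haj, ← hbi]
      have hcoord : ∀ u v : Fin n, ψ u ≠ ψ v →
          W (EuclideanSpace.single u 1 - EuclideanSpace.single v 1) (ψ u) =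
            W (EuclideanSpace.single u 1) (ψ u) ∧
          W (EuclideanSpace.single u 1 - EuclideanSpace.single v 1) (ψ v) =
            - W (EuclideanSpace.single v 1) (ψ v) := by
        intro u v huvne
        constructor
        · rw [map_sub, PiLp.sub_apply, hψ0 v (ψ u) huvne, sub_zero]
        · rw [map_sub, PiLp.sub_apply, hψ0 u (ψ v) (fun h => huvne h.symm), zero_sub]
      have hfa : (vec₂ f) (ψ a) ≠ 0 ∧ (vec₂ f) (ψ b) ≠ 0 := by
        have hvf : vec₂ f = ε (some e) • W (vec₁ e) := by
          rw [hWe, hεs]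
        rcases hv1' with hv | hv
        · obtain ⟨hca, hcb⟩ := hcoord a b hψne
          constructor
          · rw [hvf, PiLp.smul_apply, hv, hca, smul_eq_mul]
            exact mul_ne_zero (hε0 _) (hsne _)
          · rw [hvf, PiLp.smul_apply, hv, hcb, smul_eq_mul]
            exact mul_ne_zero (hε0 _) (neg_ne_zero.mpr (hsne _))
        · obtain ⟨hcb, hca⟩ := hcoord b a (fun h => hψne h.symm)
          constructor
          · rw [hvf, PiLp.smul_apply, hv, hca, smul_eq_mul]
            exact mul_ne_zero (hε0 _) (neg_ne_zero.mpr (hsne _))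
          · rw [hvf, PiLp.smul_apply, hv, hcb, smul_eq_mul]
            exact mul_ne_zero (hε0 _) (hsne _)
      have hmem : ∀ x : Fin n, (vec₂ f) x ≠ 0 → x = k ∨ x = l := by
        intro x hx
        by_contra hcc
        push_neg at hcc
        apply hx
        rw [hv2, PiLp.sub_apply, EuclideanSpace.single_apply, EuclideanSpace.single_apply,
          if_neg hcc.1, if_neg hcc.2, sub_zero]
      have hψaf := hmem (ψ a) hfa.1
      have hψbf := hmem (ψ b) hfa.2
      have hs : s(ψ a, ψ b) = s(k, l) := by
        rcases hψaf with h1 | h1 <;> rcases hψbf with h2 | h2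
        · exact absurd (h1.trans h2.symm) hψne
        · rw [h1, h2]
        · rw [h1, h2, Sym2.eq_swap]
        · exact absurd (h1.trans h2.symm) hψne
      have : s(ψ a, ψ b) ∈ T₂.edgeSet := by rw [hs, ← hkl]; exact f.2
      exact this
    -- build the isomorphism via edge counting
    have hbij : Function.Bijective ψ := Finite.injective_iff_bijective.mp hψinj
    have hsub : T₁.edgeFinset.image (Sym2.map ψ) ⊆ T₂.edgeFinset := by
      intro e' he'
      obtain ⟨e0, he0, rfl⟩ := Finset.mem_image.mp he'
      revert he0
      refine Sym2.ind (fun x y hxy => ?_) e0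
      rw [Sym2.map_pair_eq]
      exact SimpleGraph.mem_edgeFinset.mpr (hadj x y (SimpleGraph.mem_edgeFinset.mp hxy))
    have hcard₁ := h₁.card_edgeFinset
    have hcard₂ := h₂.card_edgeFinset
    have himg : T₁.edgeFinset.image (Sym2.map ψ) = T₂.edgeFinset := by
      apply Finset.eq_of_subset_of_card_le hsub
      rw [Finset.card_image_of_injective _ (Sym2.map.injective hψinj)]
      omega
    have hrev : ∀ a b : Fin n, T₂.Adj (ψ a) (ψ b) → T₁.Adj a b := by
      intro a b h
      have hmem2 : s(ψ a, ψ b) ∈ T₂.edgeFinset := SimpleGraph.mem_edgeFinset.mpr h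
      rw [← himg] at hmem2
      obtain ⟨e0, he0, heq0⟩ := Finset.mem_image.mp hmem2
      have : e0 = s(a, b) := Sym2.map.injective hψinj (by rw [heq0, Sym2.map_pair_eq])
      rw [this] at he0
      exact SimpleGraph.mem_edgeFinset.mp he0
    refine ⟨⟨Equiv.ofBijective ψ hbij, ?_⟩, hψm⟩
    intro a b
    exact ⟨hrev a b, hadj a b⟩
end

section
/- Let G be a connected simple graph on the vertex set Fin n with exactly n edges, and let {a, b} and {c, d} be two edges of G that are not bridges. For a non-bridge edge {a, b}, let F_{a,b} denote the vector family assigning e_a + e_b to the edge {a, b} and e_i − e_j to every other edge {i, j} of G. Then there exist a sign function δ : Fin n → {−1, 1} and signs ε_e ∈ {−1, 1} for each edge e of G such that the diagonal isometry D(x)_i = δ_i x_i satisfies D(F_{a,b}(e)) = ε_e · F_{c,d}(e) for every edge e of G. (The family of simplices obtained from a unicyclic graph does not depend on which cycle edge is chosen to carry the vector e_i + e_j.) -/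
private lemma myConn {V : Type*} {G H : SimpleGraph V} (hG : G.Connected)
    (h : ∀ u v : V, G.Adj u v → H.Reachable u v) : H.Connected := by
  rw [SimpleGraph.connected_iff]
  refine ⟨fun u v => ?_, hG.nonempty⟩
  obtain ⟨p⟩ := hG.preconnected u v
  induction p with
  | nil => rfl
  | cons h' p ih => exact (h _ _ h').trans ih

private lemma connDel {V : Type*} {G : SimpleGraph V} (hconn : G.Connected) {r s : V}
    (hrs : G.Adj r s) (hnb : ¬ G.IsBridge s(r, s)) :
    (G \ SimpleGraph.fromEdgeSet {s(r, s)}).Connected := by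
  have hreach : (G \ SimpleGraph.fromEdgeSet {s(r, s)}).Reachable r s := by
    by_contra hcon
    exact hnb (SimpleGraph.isBridge_iff.mpr hcon)
  refine myConn hconn fun u v huv => ?_
  by_cases he : s(u, v) = s(r, s)
  · rcases Sym2.eq_iff.mp he with ⟨rfl, rfl⟩ | ⟨rfl, rfl⟩
    · exact hreach
    · exact hreach.symm
  · exact SimpleGraph.Adj.reachable (by simp [SimpleGraph.sdiff_adj, huv, he])

private lemma myCard {V : Type*} [Fintype V] {G : SimpleGraph V} (h : G.Connected) :
    Fintype.card V ≤ G.edgeSet.ncard + 1 := by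
  classical
  obtain ⟨v₀⟩ := h.nonempty
  have key : ∀ w : V, w ≠ v₀ → ∃ u : V, s(w, u) ∈ G.edgeSet ∧
      G.dist u v₀ + 1 = G.dist w v₀ := by
    intro w hw
    obtain ⟨p, hp⟩ := (h.preconnected w v₀).exists_walk_length_eq_dist
    cases p with
    | nil => exact absurd rfl hw
    | @cons _ u _ hadj q =>
      refine ⟨u, hadj, ?_⟩
      have h1 : G.dist u v₀ ≤ q.length := SimpleGraph.dist_le q
      have h2 : q.length + 1 = G.dist w v₀ := by
        simpa [SimpleGraph.Walk.length_cons] using hp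
      have h3 : G.dist w v₀ ≤ G.dist w u + G.dist u v₀ := h.dist_triangle
      have h4 : G.dist w u = 1 := SimpleGraph.dist_eq_one_iff_adj.mpr hadj
      omega
  choose u hu hd using key
  set f : V → Sym2 V := fun w => if hw : w = v₀ then s(v₀, v₀) else s(w, u w hw) with hf
  have hinj : Set.InjOn f ({v₀}ᶜ : Set V) := by
    intro w1 h1 w2 h2 heq
    simp only [Set.mem_compl_iff, Set.mem_singleton_iff] at h1 h2
    simp only [hf, dif_neg h1, dif_neg h2, Sym2.eq_iff] at heq
    rcases heq with ⟨h, -⟩ | ⟨he1, he2⟩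
    · exact h
    · have ha := hd w1 h1
      have hb := hd w2 h2
      rw [he2] at ha
      rw [← he1] at hb
      omega
  have himg : f '' ({v₀}ᶜ : Set V) ⊆ G.edgeSet := by
    rintro - ⟨w, hw, rfl⟩
    simp only [Set.mem_compl_iff, Set.mem_singleton_iff] at hw
    simpa [hf, dif_neg hw] using hu w hw
  have h1 : ({v₀}ᶜ : Set V).ncard ≤ G.edgeSet.ncard := by
    rw [← Set.ncard_image_of_injOn hinj]
    exact Set.ncard_le_ncard himg (Set.toFinite _)
  have h2 := Set.ncard_add_ncard_compl ({v₀} : Set V)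
  rw [Set.ncard_singleton, Nat.card_eq_fintype_card] at h2
  omega

private lemma myNotReach {V : Type*} [Fintype V] {G : SimpleGraph V}
    (hconn : G.Connected) {p q r s : V}
    (hpq : s(p, q) ∈ G.edgeSet) (hrs : s(r, s) ∈ G.edgeSet)
    (hne : s(p, q) ≠ s(r, s)) (hnb : ¬ G.IsBridge s(r, s))
    (hcard : Fintype.card V = G.edgeSet.ncard) :
    ¬ ((G \ SimpleGraph.fromEdgeSet {s(r, s)}) \
        SimpleGraph.fromEdgeSet {s(p, q)}).Reachable p q := by
  intro hR
  set G₂ := G \ SimpleGraph.fromEdgeSet {s(r, s)} with hG₂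
  set H := G₂ \ SimpleGraph.fromEdgeSet {s(p, q)} with hH
  have hG₂conn : G₂.Connected := connDel hconn ((G.mem_edgeSet).mp hrs) hnb
  have hHconn : H.Connected := by
    refine myConn hG₂conn fun u v huv => ?_
    by_cases he : s(u, v) = s(p, q)
    · rcases Sym2.eq_iff.mp he with ⟨rfl, rfl⟩ | ⟨rfl, rfl⟩
      · exact hR
      · exact hR.symm
    · exact SimpleGraph.Adj.reachable (by simp [hH, SimpleGraph.sdiff_adj, huv, he])
  have e1 : G₂.edgeSet = G.edgeSet \ {s(r, s)} := by
    rw [hG₂, SimpleGraph.edgeSet_sdiff, SimpleGraph.edgeSet_fromEdgeSet,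
      SimpleGraph.edgeSet_sdiff_sdiff_isDiag]
  have hE : H.edgeSet = (G.edgeSet \ {s(r, s)}) \ {s(p, q)} := by
    rw [hH, SimpleGraph.edgeSet_sdiff, SimpleGraph.edgeSet_fromEdgeSet,
      SimpleGraph.edgeSet_sdiff_sdiff_isDiag, e1]
  have hcard1 : (G.edgeSet \ {s(r, s)}).ncard = G.edgeSet.ncard - 1 :=
    Set.ncard_diff_singleton_of_mem hrs
  have hcard2 : ((G.edgeSet \ {s(r, s)}) \ {s(p, q)}).ncard = G.edgeSet.ncard - 1 - 1 := by
    rw [Set.ncard_diff_singleton_of_mem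
      ((Set.mem_diff _).mpr ⟨hpq, by simpa using hne⟩), hcard1]
  have hbound := myCard hHconn
  rw [hE, hcard2] at hbound
  have h2 : 2 ≤ G.edgeSet.ncard := by
    have hsub : ({s(p, q), s(r, s)} : Set (Sym2 V)) ⊆ G.edgeSet := by
      rintro x (rfl | rfl)
      · exact hpq
      · exact hrs
    calc 2 = ({s(p, q), s(r, s)} : Set (Sym2 V)).ncard := (Set.ncard_pair hne).symm
      _ ≤ _ := Set.ncard_le_ncard hsub (Set.toFinite _)
  omega

private lemma side_lemma {V : Type*} {G₂ H : SimpleGraph V} {a b : V}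
    (hadj : ∀ u v : V, G₂.Adj u v → s(u, v) ≠ s(a, b) → H.Adj u v) :
    ∀ {v w : V}, G₂.Reachable v w → w = a → H.Reachable v a ∨ H.Reachable v b := by
  intro v w hr
  obtain ⟨p⟩ := hr
  induction p with
  | nil =>
    intro h
    rw [h]
    exact Or.inl (SimpleGraph.Reachable.refl _)
  | @cons x y z h' q ih =>
    intro hwa
    specialize ih hwa
    by_cases he : s(x, y) = s(a, b)
    · rcases Sym2.eq_iff.mp he with ⟨h1, h2⟩ | ⟨h1, h2⟩
      · rw [h1]; exact Or.inl (SimpleGraph.Reachable.refl _)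
      · rw [h1]; exact Or.inr (SimpleGraph.Reachable.refl _)
    · have hxy : H.Adj x y := hadj x y h' he
      rcases ih with h | h
      · exact Or.inl (hxy.reachable.trans h)
      · exact Or.inr (hxy.reachable.trans h)

private lemma generic_eps {n : ℕ} (δ : Fin n → ℝ) {i j i' j' : Fin n}
    (hij : i ≠ j) (hEq : s(i, j) = s(i', j')) (hδ : δ i = δ j) :
    ∃ ε : ℝ, (ε = δ i ∨ ε = -δ i) ∧ ∀ k : Fin n,
      δ k * ((EuclideanSpace.single i (1:ℝ) - EuclideanSpace.single j 1 :
        EuclideanSpace ℝ (Fin n)) k) =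
      ε * ((EuclideanSpace.single i' (1:ℝ) - EuclideanSpace.single j' 1 :
        EuclideanSpace ℝ (Fin n)) k) := by
  rcases Sym2.eq_iff.mp hEq with ⟨rfl, rfl⟩ | ⟨rfl, rfl⟩
  · refine ⟨δ i, Or.inl rfl, fun k => ?_⟩
    simp only [PiLp.sub_apply, EuclideanSpace.single_apply]
    by_cases h1 : k = i <;> by_cases h2 : k = j <;> simp_all
  · refine ⟨-δ i, Or.inr rfl, fun k => ?_⟩
    simp only [PiLp.sub_apply, EuclideanSpace.single_apply]
    by_cases h1 : k = i <;> by_cases h2 : k = j <;> simp_all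

private lemma sum_diff_eps {n : ℕ} (δ : Fin n → ℝ) {x y i j : Fin n}
    (hxy : x ≠ y) (hEq : s(x, y) = s(i, j)) (hδ : δ y = -δ x) :
    ∃ ε : ℝ, (ε = δ x ∨ ε = -δ x) ∧ ∀ k : Fin n,
      δ k * ((EuclideanSpace.single x (1:ℝ) + EuclideanSpace.single y 1 :
        EuclideanSpace ℝ (Fin n)) k) =
      ε * ((EuclideanSpace.single i (1:ℝ) - EuclideanSpace.single j 1 :
        EuclideanSpace ℝ (Fin n)) k) := by
  rcases Sym2.eq_iff.mp hEq with ⟨rfl, rfl⟩ | ⟨rfl, rfl⟩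
  · refine ⟨δ x, Or.inl rfl, fun k => ?_⟩
    simp only [PiLp.sub_apply, PiLp.add_apply, EuclideanSpace.single_apply]
    by_cases h1 : k = x <;> by_cases h2 : k = y <;> simp_all
  · refine ⟨-δ x, Or.inr rfl, fun k => ?_⟩
    simp only [PiLp.sub_apply, PiLp.add_apply, EuclideanSpace.single_apply]
    by_cases h1 : k = x <;> by_cases h2 : k = y <;> simp_all

private lemma diff_sum_eps {n : ℕ} (δ : Fin n → ℝ) {x y i j : Fin n}
    (hxy : x ≠ y) (hEq : s(i, j) = s(x, y)) (hδ : δ y = -δ x) :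
    ∃ ε : ℝ, (ε = δ x ∨ ε = -δ x) ∧ ∀ k : Fin n,
      δ k * ((EuclideanSpace.single i (1:ℝ) - EuclideanSpace.single j 1 :
        EuclideanSpace ℝ (Fin n)) k) =
      ε * ((EuclideanSpace.single x (1:ℝ) + EuclideanSpace.single y 1 :
        EuclideanSpace ℝ (Fin n)) k) := by
  rcases Sym2.eq_iff.mp hEq with ⟨rfl, rfl⟩ | ⟨rfl, rfl⟩
  · refine ⟨δ i, Or.inl rfl, fun k => ?_⟩
    simp only [PiLp.sub_apply, PiLp.add_apply, EuclideanSpace.single_apply]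
    by_cases h1 : k = i <;> by_cases h2 : k = j <;> simp_all
  · refine ⟨δ i, Or.inr hδ, fun k => ?_⟩
    simp only [PiLp.sub_apply, PiLp.add_apply, EuclideanSpace.single_apply]
    by_cases h1 : k = i <;> by_cases h2 : k = j <;> simp_all

/-- The family of simplices obtained from a unicyclic graph does not depend on which
cycle edge is chosen to carry the vector `eᵢ + eⱼ`: if `{a, b}` and `{c, d}` are two
non-bridge edges of a connected graph `G` on `Fin n` with `n` edges, then the two
associated vector families agree, edge by edge, up to a diagonal isometry
`D(x)ᵢ = δᵢ xᵢ` and signs. -/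
theorem Dn_choice_of_cycle_edge_irrelevant {n : ℕ}
    (G : SimpleGraph (Fin n)) (hconn : G.Connected)
    (hcard : G.edgeSet.ncard = n)
    (a b c d : Fin n)
    (hab : s(a, b) ∈ G.edgeSet) (hcd : s(c, d) ∈ G.edgeSet)
    (hnb_ab : ¬ G.IsBridge s(a, b)) (hnb_cd : ¬ G.IsBridge s(c, d))
    (F₁ F₂ : G.edgeSet → EuclideanSpace ℝ (Fin n))
    (hF₁_ab : F₁ ⟨s(a, b), hab⟩ =
      EuclideanSpace.single a 1 + EuclideanSpace.single b 1)
    (hF₁ : ∀ e : G.edgeSet, (e : Sym2 (Fin n)) ≠ s(a, b) →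
      ∃ i j : Fin n, (e : Sym2 (Fin n)) = s(i, j) ∧
        F₁ e = EuclideanSpace.single i 1 - EuclideanSpace.single j 1)
    (hF₂_cd : F₂ ⟨s(c, d), hcd⟩ =
      EuclideanSpace.single c 1 + EuclideanSpace.single d 1)
    (hF₂ : ∀ e : G.edgeSet, (e : Sym2 (Fin n)) ≠ s(c, d) →
      ∃ i j : Fin n, (e : Sym2 (Fin n)) = s(i, j) ∧
        F₂ e = EuclideanSpace.single i 1 - EuclideanSpace.single j 1) :
    ∃ (δ : Fin n → ℝ) (ε : G.edgeSet → ℝ),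
      (∀ i, δ i = 1 ∨ δ i = -1) ∧ (∀ e, ε e = 1 ∨ ε e = -1) ∧
      ∀ (e : G.edgeSet) (i : Fin n), δ i * F₁ e i = ε e * F₂ e i := by
  classical
  have hadj_ab : G.Adj a b := (G.mem_edgeSet).mp hab
  have hadj_cd : G.Adj c d := (G.mem_edgeSet).mp hcd
  have hab_ne : a ≠ b := hadj_ab.ne
  have hcd_ne : c ≠ d := hadj_cd.ne
  by_cases hsp : s(a, b) = s(c, d)
  · -- the two special edges coincide
    set δ : Fin n → ℝ := fun _ => 1 with hδdef
    have hε : ∀ e : G.edgeSet, ∃ ε : ℝ, (ε = 1 ∨ ε = -1) ∧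
        ∀ k, δ k * F₁ e k = ε * F₂ e k := by
      intro e
      by_cases he : (e : Sym2 (Fin n)) = s(a, b)
      · have hF1 : F₁ e = EuclideanSpace.single a 1 + EuclideanSpace.single b 1 := by
          rw [show e = ⟨s(a, b), hab⟩ from Subtype.ext he]; exact hF₁_ab
        have hF2 : F₂ e = EuclideanSpace.single c 1 + EuclideanSpace.single d 1 := by
          rw [show e = ⟨s(c, d), hcd⟩ from Subtype.ext (he.trans hsp)]; exact hF₂_cd
        refine ⟨1, Or.inl rfl, fun k => ?_⟩
        rw [hF1, hF2]
        rcases Sym2.eq_iff.mp hsp with ⟨rfl, rfl⟩ | ⟨rfl, rfl⟩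
        · rfl
        · simp only [PiLp.add_apply, one_mul]
          ring
      · obtain ⟨i, j, hij, hF1⟩ := hF₁ e he
        obtain ⟨i', j', hij', hF2⟩ := hF₂ e (by rw [← hsp]; exact he)
        have hije : i ≠ j := by
          have := e.2
          rw [hij] at this
          exact ((G.mem_edgeSet).mp this).ne
        obtain ⟨ε, hεor, hk⟩ := generic_eps δ hije (hij.symm.trans hij') rfl
        refine ⟨ε, by simpa [hδdef] using hεor, fun k => by rw [hF1, hF2]; exact hk k⟩
    choose ε hε1 hε2 using hε
    exact ⟨δ, ε, fun i => Or.inl rfl, hε1, hε2⟩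
  · -- distinct special edges
    have hcard' : Fintype.card (Fin n) = G.edgeSet.ncard := by simp [hcard]
    set G₂ := G \ SimpleGraph.fromEdgeSet {s(c, d)} with hG₂def
    set H := G₂ \ SimpleGraph.fromEdgeSet {s(a, b)} with hHdef
    have hKab : ¬ H.Reachable a b := myNotReach hconn hab hcd hsp hnb_cd hcard'
    have hswap : (G \ SimpleGraph.fromEdgeSet {s(a, b)}) \
        SimpleGraph.fromEdgeSet {s(c, d)} = H := by
      ext u v
      simp only [hHdef, hG₂def, SimpleGraph.sdiff_adj]
      tauto
    have hKcd : ¬ H.Reachable c d := by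
      rw [← hswap]
      exact myNotReach hconn hcd hab (Ne.symm hsp) hnb_ab hcard'
    have hG₂conn : G₂.Connected := connDel hconn hadj_cd hnb_cd
    have hadjHG₂ : ∀ u v : Fin n, G₂.Adj u v → s(u, v) ≠ s(a, b) → H.Adj u v := by
      intro u v h hne
      rw [hHdef, SimpleGraph.sdiff_adj]
      exact ⟨h, by simp [SimpleGraph.fromEdgeSet_adj, hne]⟩
    have hside : ∀ v, H.Reachable v a ∨ H.Reachable v b :=
      fun v => side_lemma hadjHG₂ (hG₂conn.preconnected v a) rfl
    set δ : Fin n → ℝ := fun i => if H.Reachable a i then 1 else -1 with hδdef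
    have hδsign : ∀ i, δ i = 1 ∨ δ i = -1 := by
      intro i
      by_cases h : H.Reachable a i
      · exact Or.inl (if_pos h)
      · exact Or.inr (if_neg h)
    have hδa : δ a = 1 := if_pos (SimpleGraph.Reachable.refl a)
    have hδb : δ b = -1 := if_neg hKab
    have hδab' : δ b = -δ a := by rw [hδa, hδb]
    have hδd : δ d = -δ c := by
      rcases hside c with hc | hc <;> rcases hside d with hd' | hd'
      · exact absurd (hc.trans hd'.symm) hKcd
      · have h1 : δ c = 1 := if_pos hc.symm
        have h2 : δ d = -1 := if_neg (fun h => hKab (h.trans hd'))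
        rw [h1, h2]
      · have h1 : δ c = -1 := if_neg (fun h => hKab (h.trans hc))
        have h2 : δ d = 1 := if_pos hd'.symm
        rw [h1, h2]; norm_num
      · exact absurd (hc.trans hd'.symm) hKcd
    have hδedge : ∀ i j : Fin n, s(i, j) ∈ G.edgeSet → s(i, j) ≠ s(a, b) →
        s(i, j) ≠ s(c, d) → δ i = δ j := by
      intro i j hmem hne1 hne2
      have hadjH : H.Adj i j := by
        refine hadjHG₂ i j ?_ hne1
        rw [hG₂def, SimpleGraph.sdiff_adj]
        exact ⟨(G.mem_edgeSet).mp hmem, by simp [SimpleGraph.fromEdgeSet_adj, hne2]⟩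
      by_cases h : H.Reachable a i
      · have h2 : H.Reachable a j := h.trans hadjH.reachable
        simp only [hδdef, if_pos h, if_pos h2]
      · have h2 : ¬ H.Reachable a j := fun hh => h (hh.trans hadjH.symm.reachable)
        simp only [hδdef, if_neg h, if_neg h2]
    have hε : ∀ e : G.edgeSet, ∃ ε : ℝ, (ε = 1 ∨ ε = -1) ∧
        ∀ k, δ k * F₁ e k = ε * F₂ e k := by
      intro e
      by_cases he1 : (e : Sym2 (Fin n)) = s(a, b)
      · have hF1 : F₁ e = EuclideanSpace.single a 1 + EuclideanSpace.single b 1 := by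
          rw [show e = ⟨s(a, b), hab⟩ from Subtype.ext he1]; exact hF₁_ab
        obtain ⟨i, j, hij, hF2⟩ := hF₂ e (by rw [he1]; exact hsp)
        obtain ⟨ε, hεor, hk⟩ := sum_diff_eps δ hab_ne (he1.symm.trans hij) hδab'
        refine ⟨ε, ?_, fun k => by rw [hF1, hF2]; exact hk k⟩
        rw [hδa] at hεor
        simpa using hεor
      · by_cases he2 : (e : Sym2 (Fin n)) = s(c, d)
        · have hF2 : F₂ e = EuclideanSpace.single c 1 + EuclideanSpace.single d 1 := by
            rw [show e = ⟨s(c, d), hcd⟩ from Subtype.ext he2]; exact hF₂_cd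
          obtain ⟨i, j, hij, hF1⟩ := hF₁ e he1
          obtain ⟨ε, hεor, hk⟩ := diff_sum_eps δ hcd_ne (hij.symm.trans he2) hδd
          refine ⟨ε, ?_, fun k => by rw [hF1, hF2]; exact hk k⟩
          rcases hδsign c with h | h <;> rw [h] at hεor <;>
            rcases hεor with rfl | rfl <;> norm_num
        · obtain ⟨i, j, hij, hF1⟩ := hF₁ e he1
          obtain ⟨i', j', hij', hF2⟩ := hF₂ e he2
          have hmem : s(i, j) ∈ G.edgeSet := by rw [← hij]; exact e.2
          have hije : i ≠ j := ((G.mem_edgeSet).mp hmem).ne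
          have hδij : δ i = δ j := hδedge i j hmem
            (by rw [← hij]; exact he1) (by rw [← hij]; exact he2)
          obtain ⟨ε, hεor, hk⟩ := generic_eps δ hije (hij.symm.trans hij') hδij
          refine ⟨ε, ?_, fun k => by rw [hF1, hF2]; exact hk k⟩
          rcases hδsign i with h | h <;> rw [h] at hεor <;>
            rcases hεor with rfl | rfl <;> norm_num
    choose ε hε1 hε2 using hε
    exact ⟨δ, ε, hδsign, hε1, hε2⟩
end

section
/- Let f_1, …, f_{n+1} be a basis of EuclideanSpace ℝ (Fin (n+1)) consisting of unit vectors such that ⟪f_i, f_j⟫ ∈ {0, 1/2, −1/2} for all i ≠ j. Then the subgroup of linear isometries of EuclideanSpace ℝ (Fin (n+1)) generated by the reflections in f_1, …, f_{n+1} is finite. (Any spherical simplex whose dihedral angles belong to the set {π/2, π/3, 2π/3} generates a discrete reflection group.) -/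
open scoped RealInnerProductSpace

/-- The reflection in the hyperplane orthogonal to a vector `v`. -/
noncomputable def reflIn {m : ℕ} (v : EuclideanSpace ℝ (Fin m)) :
    EuclideanSpace ℝ (Fin m) ≃ₗᵢ[ℝ] EuclideanSpace ℝ (Fin m) :=
  Submodule.reflection (ℝ ∙ v)ᗮ

lemma reflIn_apply {m : ℕ} (v x : EuclideanSpace ℝ (Fin m)) :
    reflIn v x = x - (2 * (⟪v, x⟫ / (‖v‖ ^ 2))) • v := by
  rw [reflIn, Submodule.reflection_apply, Submodule.starProjection_orthogonal_val,
    Submodule.starProjection_singleton ℝ]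
  simp only [two_smul, two_mul, add_smul]
  abel

lemma reflIn_symm {m : ℕ} (v : EuclideanSpace ℝ (Fin m)) :
    (reflIn v).symm = reflIn v := Submodule.reflection_symm

/-- Any spherical simplex whose dihedral angles belong to `{π/2, π/3, 2π/3}` generates
a discrete (i.e. finite) reflection group: if the unit outward normals `f₁, …, f_{n+1}`
form a basis with pairwise inner products in `{0, 1/2, -1/2}`, then the group
generated by the reflections in them is finite. -/
theorem finite_reflection_group_of_angles {n : ℕ}
    (f : Fin (n + 1) → EuclideanSpace ℝ (Fin (n + 1)))
    (hbasis : LinearIndependent ℝ f)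
    (hspan : Submodule.span ℝ (Set.range f) = ⊤)
    (hunit : ∀ i, ‖f i‖ = 1)
    (hangle : ∀ i j, i ≠ j → ⟪f i, f j⟫ ∈ ({0, 1 / 2, -(1 / 2)} : Set ℝ)) :
    Finite ↥(Subgroup.closure (Set.range fun i => reflIn (f i))) := by
  set L : Submodule ℤ (EuclideanSpace ℝ (Fin (n + 1))) :=
    Submodule.span ℤ (Set.range f) with hL
  -- twice the inner product with a generator is an integer on the lattice
  have hint : ∀ i, ∀ x ∈ L, ∃ k : ℤ, 2 * ⟪f i, x⟫ = (k : ℝ) := by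
    intro i x hx
    induction hx using Submodule.span_induction with
    | mem y hy =>
      obtain ⟨j, rfl⟩ := hy
      rcases eq_or_ne i j with rfl | hij
      · exact ⟨2, by
          rw [real_inner_self_eq_norm_sq, hunit i]; norm_num⟩
      · rcases hangle i j hij with h | h | h
        · exact ⟨0, by rw [h]; norm_num⟩
        · exact ⟨1, by rw [h]; norm_num⟩
        · refine ⟨-1, ?_⟩
          rw [Set.mem_singleton_iff] at h
          rw [h]; push_cast; ring
    | zero => exact ⟨0, by simp⟩
    | add y z _ _ hy hz =>
      obtain ⟨k, hk⟩ := hy; obtain ⟨l, hl⟩ := hz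
      exact ⟨k + l, by rw [inner_add_right]; push_cast [← hk, ← hl]; ring⟩
    | smul c y _ hy =>
      obtain ⟨k, hk⟩ := hy
      refine ⟨c * k, ?_⟩
      rw [← Int.cast_smul_eq_zsmul ℝ c y, real_inner_smul_right]
      push_cast [← hk]; ring
  -- each generating reflection preserves the lattice
  have hrefl : ∀ i, ∀ x ∈ L, reflIn (f i) x ∈ L := by
    intro i x hx
    obtain ⟨k, hk⟩ := hint i x hx
    rw [reflIn_apply, hunit i]
    have : (2 * (⟪f i, x⟫ / (1 : ℝ) ^ 2)) • f i = k • f i := by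
      rw [← Int.cast_smul_eq_zsmul ℝ k, ← hk]; norm_num
    rw [this]
    exact Submodule.sub_mem _ hx
      (Submodule.smul_mem _ _ (Submodule.subset_span (Set.mem_range_self i)))
  -- every element of the closure preserves the lattice
  have hclos : ∀ g ∈ Subgroup.closure (Set.range fun i => reflIn (f i)),
      ∀ x ∈ L, g x ∈ L := by
    intro g hg
    refine (Subgroup.closure_induction
      (p := fun g _ => (∀ x ∈ L, g x ∈ L) ∧ (∀ x ∈ L, g.symm x ∈ L)) ?_ ?_ ?_ ?_ hg).1
    · rintro g ⟨i, rfl⟩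
      exact ⟨hrefl i, by rw [reflIn_symm]; exact hrefl i⟩
    · exact ⟨fun x hx => hx, fun x hx => hx⟩
    · rintro a b _ _ ⟨ha, ha'⟩ ⟨hb, hb'⟩
      exact ⟨fun x hx => ha _ (hb x hx), fun x hx => hb' _ (ha' x hx)⟩
    · rintro a _ ⟨ha, ha'⟩
      exact ⟨ha', fun x hx => ha x hx⟩
  -- the set of unit vectors in the lattice is finite
  let b : Module.Basis (Fin (n + 1)) ℝ (EuclideanSpace ℝ (Fin (n + 1))) := Module.Basis.mk hbasis hspan.ge
  have hbf : ⇑b = f := Module.Basis.coe_mk _ _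
  have hdisc : DiscreteTopology L := by
    have : DiscreteTopology (Submodule.span ℤ (Set.range ⇑b)) := inferInstance
    rwa [hbf] at this
  have hdiscA : DiscreteTopology L.toAddSubgroup := hdisc
  have hclosed : IsClosed (L : Set (EuclideanSpace ℝ (Fin (n + 1)))) :=
    AddSubgroup.isClosed_of_discrete (H := L.toAddSubgroup)
  have hScompact :
      IsCompact (Metric.sphere (0 : EuclideanSpace ℝ (Fin (n + 1))) 1 ∩ (L : Set _)) :=
    (isCompact_sphere 0 1).inter_right hclosed
  have hSdisc :
      DiscreteTopology (Metric.sphere (0 : EuclideanSpace ℝ (Fin (n + 1))) 1 ∩ (L : Set _) :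
        Set (EuclideanSpace ℝ (Fin (n + 1)))) :=
    DiscreteTopology.of_subset hdisc Set.inter_subset_right
  have hSfin :
      (Metric.sphere (0 : EuclideanSpace ℝ (Fin (n + 1))) 1 ∩ (L : Set _)).Finite :=
    hScompact.finite (isDiscrete_iff_discreteTopology.mpr hSdisc)
  have : Finite ↥(Metric.sphere (0 : EuclideanSpace ℝ (Fin (n + 1))) 1 ∩ (L : Set _)) :=
    hSfin.to_subtype
  -- inject the group into functions from `Fin (n+1)` to this finite set
  have hmem : ∀ g : ↥(Subgroup.closure (Set.range fun i => reflIn (f i))), ∀ i,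
      g.1 (f i) ∈ Metric.sphere (0 : EuclideanSpace ℝ (Fin (n + 1))) 1 ∩ (L : Set _) := by
    intro g i
    constructor
    · simp [g.1.norm_map, hunit i]
    · exact hclos g.1 g.2 (f i) (Submodule.subset_span (Set.mem_range_self i))
  refine Finite.of_injective (fun g => fun i =>
    (⟨g.1 (f i), hmem g i⟩ :
      ↥(Metric.sphere (0 : EuclideanSpace ℝ (Fin (n + 1))) 1 ∩ (L : Set _)))) ?_
  intro g g' h
  have h' : ∀ i, g.1 (f i) = g'.1 (f i) := fun i => congrArg Subtype.val (congrFun h i)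
  have heq : (g.1.toLinearEquiv :
      EuclideanSpace ℝ (Fin (n + 1)) →ₗ[ℝ] EuclideanSpace ℝ (Fin (n + 1))) =
      (g'.1.toLinearEquiv : _) := by
    refine b.ext fun i => ?_
    simpa [hbf] using h' i
  exact Subtype.ext (LinearIsometryEquiv.ext fun x => LinearMap.congr_fun heq x)
end
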